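/- arXiv:1402.2041 — 3 statements merged into one kernel-verified Lean document; each statement's English description precedes it below -/
import Mathlib

section
/- Let G be a simple graph on vertex set [n] and let i ∈ [n]. In the polynomial ring S = K[x_1,...,x_n,y_1,...,y_n] with the lexicographic order induced by x_1 > ... > x_n > y_1 > ... > y_n, the initial ideal of (J_G, x_i, y_i) equals (in(J_G), x_i, y_i), where J_G is the binomial edge ideal of G. -/
open MvPolynomial SimpleGraph Classical
open scoped BigOperators

noncomputable section BinomialEdgeIdeals

variable (K : Type*) [Field K]

/-- `f i j = x_i y_j - x_j y_i` in `S = K[x_v, y_v : v ∈ V]`, where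
`x_v = X (Sum.inl v)` and `y_v = X (Sum.inr v)`. -/
def fij {V : Type*} (i j : V) : MvPolynomial (V ⊕ V) K :=
  X (Sum.inl i) * X (Sum.inr j) - X (Sum.inl j) * X (Sum.inr i)

/-- The binomial edge ideal of a simple graph `G` on a linearly ordered vertex set. -/
def beIdeal {V : Type*} [LinearOrder V] (G : SimpleGraph V) :
    Ideal (MvPolynomial (V ⊕ V) K) :=
  Ideal.span { f | ∃ i j : V, i < j ∧ G.Adj i j ∧ f = fij K i j }

/-- Exponent vectors, compared lexicographically with
`x_1 > x_2 > ⋯ > x_n > y_1 > ⋯ > y_n`: the variable `x_i` is encoded as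
`i - 1 ∈ Fin (n+n)` and `y_i` as `n + i - 1`, and a *smaller* code means a *bigger*
variable, so the `Finsupp.Lex` order (which compares at the smallest differing index)
is exactly the lexicographic monomial order induced by this order of the variables. -/
def expLex {n : ℕ} (m : (Fin n ⊕ Fin n) →₀ ℕ) : Lex (Fin (n + n) →₀ ℕ) :=
  toLex (Finsupp.equivMapDomain finSumFinEquiv m)

/-- The leading exponent (largest exponent vector in the support, in the lexicographic
order `x_1 > ⋯ > x_n > y_1 > ⋯ > y_n`) of a polynomial; junk value `0` for `p = 0`. -/
def leadExp {n : ℕ} (p : MvPolynomial (Fin n ⊕ Fin n) K) : (Fin n ⊕ Fin n) →₀ ℕ :=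
  Finsupp.equivMapDomain finSumFinEquiv.symm
    (ofLex (WithBot.unbotD (toLex 0) (p.support.image (fun m => expLex m)).max))

/-- The initial ideal of `I` with respect to the lexicographic order induced by
`x_1 > ⋯ > x_n > y_1 > ⋯ > y_n`. -/
def initialIdeal {n : ℕ} (I : Ideal (MvPolynomial (Fin n ⊕ Fin n) K)) :
    Ideal (MvPolynomial (Fin n ⊕ Fin n) K) :=
  Ideal.span { q | ∃ p ∈ I, p ≠ 0 ∧ q = monomial (leadExp K p) (1 : K) }

/-- The graded maximal ideal, generated by all the variables. -/
def varIdeal (V : Type*) : Ideal (MvPolynomial (V ⊕ V) K) :=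
  Ideal.span (Set.range X)

/-- `depth (S/I)`: the supremum of the lengths of regular sequences on `S/I`
consisting of elements of the graded maximal ideal. -/
def quotDepth {V : Type*} (I : Ideal (MvPolynomial (V ⊕ V) K)) : ℕ :=
  sSup { k | ∃ rs : List (MvPolynomial (V ⊕ V) K), rs.length = k ∧
    (∀ r ∈ rs, r ∈ varIdeal K V) ∧
    RingTheory.Sequence.IsRegular (MvPolynomial (V ⊕ V) K ⧸ I) rs }

/-- `p` is homogeneous of degree `d ∈ ℤ` (the zero polynomial having every degree). -/
def IsHomogInt {σ : Type*} (p : MvPolynomial σ K) (d : ℤ) : Prop :=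
  p = 0 ∨ ∃ m : ℕ, (m : ℤ) = d ∧ p.IsHomogeneous m

/-- A graded free resolution of `S/I`: free modules `F i = ⊕_j S(-j)^{b i j}`
(with basis indexed by `Σ j : ℤ, Fin (b i j)`), degree-zero (i.e. twist-compatible
homogeneous) differentials, exact, augmented by a degree-zero surjection onto `S ⧸ I`. -/
structure GradedFreeResolution {σ : Type*} (I : Ideal (MvPolynomial σ K)) where
  b : ℕ → ℤ →₀ ℕ
  diff : ∀ i : ℕ, ((Σ j : ℤ, Fin (b (i + 1) j)) →₀ MvPolynomial σ K) →ₗ[MvPolynomial σ K]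
      ((Σ j : ℤ, Fin (b i j)) →₀ MvPolynomial σ K)
  aug : ((Σ j : ℤ, Fin (b 0 j)) →₀ MvPolynomial σ K) →ₗ[MvPolynomial σ K]
      (MvPolynomial σ K ⧸ I)
  homog : ∀ (i : ℕ) (j : ℤ) (k : Fin (b (i + 1) j)) (j' : ℤ) (k' : Fin (b i j')),
    IsHomogInt K ((diff i (Finsupp.single ⟨j, k⟩ 1)) ⟨j', k'⟩) (j - j')
  aug_homog : ∀ (j : ℤ) (k : Fin (b 0 j)), ∃ p : MvPolynomial σ K,
    IsHomogInt K p j ∧ aug (Finsupp.single ⟨j, k⟩ 1) = Ideal.Quotient.mk I p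
  aug_surj : Function.Surjective aug
  exact_zero : Function.Exact (diff 0) aug
  exact_succ : ∀ i : ℕ, Function.Exact (diff (i + 1)) (diff i)

/-- The Castelnuovo–Mumford regularity of `S/I`: the least `r` such that `S/I` admits a
graded free resolution with all `i`-th syzygies generated in degrees `≤ i + r` (the
minimal graded free resolution realizes this minimum). -/
def regQuot {σ : Type*} (I : Ideal (MvPolynomial σ K)) : ℤ :=
  sInf { r : ℤ | ∃ F : GradedFreeResolution K I, ∀ i j, F.b i j ≠ 0 → j ≤ i + r }

/- ### Graph-theoretic notions -/

/-- `s` is a maximal clique of `G`. -/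
def IsMaxClique {V : Type*} (G : SimpleGraph V) (s : Finset V) : Prop :=
  G.IsClique ↑s ∧ ∀ t : Finset V, G.IsClique ↑t → s ⊆ t → s = t

/-- A graph is chordal if it has no induced cycle of length `≥ 4`. -/
def Chordal {V : Type*} (G : SimpleGraph V) : Prop :=
  ∀ m : ℕ, 4 ≤ m → IsEmpty (cycleGraph m ↪g G)

/-- A block graph: a chordal graph in which any two distinct maximal cliques meet in at
most one vertex. -/
def IsBlockGraph {V : Type*} (G : SimpleGraph V) : Prop :=
  Chordal G ∧ ∀ s t : Finset V, IsMaxClique G s → IsMaxClique G t → s ≠ t →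
    (s ∩ t).card ≤ 1

/-- The conditions (i) and (ii) defining a `C_ℓ`-graph, for a given sequence of cliques
`F 0, …, F (ℓ-1)`: each `F i` is a maximal clique with at least `2` vertices, consecutive
cliques meet in exactly one vertex, non-consecutive cliques are disjoint, and every edge
of `G` either lies in some `F i` or is a pendant edge `{j, k}` attached at an
intersection point `j` of two consecutive cliques, with `k` of degree `1`. -/
def IsCliqueSeq {V : Type*} (G : SimpleGraph V) (ℓ : ℕ) (F : Fin ℓ → Finset V) : Prop :=
  (∀ i, IsMaxClique G (F i) ∧ 2 ≤ (F i).card) ∧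
  (∀ i : Fin ℓ, ∀ h : i.val + 1 < ℓ, (F i ∩ F ⟨i.val + 1, h⟩).card = 1) ∧
  (∀ i j : Fin ℓ, i < j → j.val ≠ i.val + 1 → F i ∩ F j = ∅) ∧
  (∀ e ∈ G.edgeSet, (∃ i, ∀ v ∈ e, v ∈ F i) ∨
    (∃ (jv kv : V) (i : Fin ℓ) (h : i.val + 1 < ℓ), e = s(jv, kv) ∧
      jv ∈ F i ∩ F ⟨i.val + 1, h⟩ ∧ (G.neighborSet kv).ncard = 1))

/-- A `C_ℓ`-graph. -/
def IsCLGraph {V : Type*} (G : SimpleGraph V) (ℓ : ℕ) : Prop :=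
  G.Connected ∧ ∃ F : Fin ℓ → Finset V, IsCliqueSeq G ℓ F

/-- `G` has an induced path of length `k` (an induced subgraph isomorphic to the path
graph with `k` edges). -/
def HasInducedPathLen {V : Type*} (G : SimpleGraph V) (k : ℕ) : Prop :=
  Nonempty (pathGraph (k + 1) ↪g G)

/-- The longest induced path of `G` has length `ℓ`. -/
def LongestInducedPathLen {V : Type*} (G : SimpleGraph V) (ℓ : ℕ) : Prop :=
  HasInducedPathLen G ℓ ∧ ∀ k, HasInducedPathLen G k → k ≤ ℓ

/-- The longest path of `G` has length `ℓ`. -/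
def LongestPathLen {V : Type*} (G : SimpleGraph V) (ℓ : ℕ) : Prop :=
  (∃ (u v : V) (p : G.Walk u v), p.IsPath ∧ p.length = ℓ) ∧
  ∀ (u v : V) (p : G.Walk u v), p.IsPath → p.length ≤ ℓ

/-- A caterpillar tree: a tree containing a path `P` such that every vertex is a vertex
of `P` or adjacent to a vertex of `P`. -/
def IsCaterpillar {V : Type*} (T : SimpleGraph V) : Prop :=
  T.IsTree ∧ ∃ (u v : V) (p : T.Walk u v), p.IsPath ∧
    ∀ w : V, w ∈ p.support ∨ ∃ z ∈ p.support, T.Adj w z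

/-- The spider tree on `ℓ + 3` vertices: a path `0 — 1 — ⋯ — ℓ` together with a path
`k — (ℓ+1) — (ℓ+2)` of length 2 attached at the vertex `k`. -/
def spider (ℓ k : ℕ) : SimpleGraph (Fin (ℓ + 3)) :=
  SimpleGraph.fromRel (fun a b =>
    (a.val + 1 = b.val ∧ b.val ≤ ℓ) ∨ (a.val = k ∧ b.val = ℓ + 1) ∨
    (a.val = ℓ + 1 ∧ b.val = ℓ + 2))

/-- The graph obtained from `G` by deleting the vertices in `T` (keeping the ambient
vertex set: the vertices of `T` simply become isolated). -/
def delVerts {V : Type*} (G : SimpleGraph V) (T : Set V) : SimpleGraph V where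
  Adj a b := G.Adj a b ∧ a ∉ T ∧ b ∉ T
  symm := ⟨fun a b h => ⟨h.1.symm, h.2.2, h.2.1⟩⟩
  loopless := ⟨fun a h => G.loopless.irrefl a h.1⟩

/-- The prime ideal `P_T(G)`: generated by `x_i, y_i` for `i ∈ T`, together with the
binomial edge ideals of the complete graphs on the connected components of the
restriction of `G` to the complement of `T`. -/
def cutPrime {V : Type*} [LinearOrder V] (G : SimpleGraph V) (T : Set V) :
    Ideal (MvPolynomial (V ⊕ V) K) :=
  Ideal.span ({ q | ∃ i ∈ T, q = X (Sum.inl i) ∨ q = X (Sum.inr i) } ∪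
    { q | ∃ i j : V, i < j ∧ i ∉ T ∧ j ∉ T ∧ (delVerts G T).Reachable i j ∧
      q = fij K i j })

/-- `c(T)`: the number of connected components of the restriction of `G` to the
complement of `T`. -/
def numComp {V : Type*} (G : SimpleGraph V) (T : Set V) : ℕ :=
  Nat.card ((G.induce Tᶜ).ConnectedComponent)

/-- `F 0, …, F (r-1)` is a leaf order on the maximal cliques of `G`: it enumerates them
without repetition, and each `F k` with `k > 0` is a leaf of the simplicial complex
generated by `F 0, …, F k`, i.e. admits a branch `F b`, `b < k`. -/
def IsLeafOrder {V : Type*} (G : SimpleGraph V) (r : ℕ) (F : Fin r → Finset V) : Prop :=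
  Function.Injective F ∧ (Set.range F = { s | IsMaxClique G s }) ∧
  ∀ k : Fin r, 0 < k.val → ∃ b : Fin r, b < k ∧
    ∀ m : Fin r, m < k → F m ∩ F k ⊆ F b ∩ F k

/-- An admissible path from `i` to `j` (`i < j`) in `G`: a path (recorded as its list of
vertices) with pairwise distinct vertices, whose interior vertices `v` all satisfy
`v < i` or `v > j`, and which is minimal: no proper subsequence with the same endpoints
is again a path of `G`. -/
def IsAdmissiblePath {n : ℕ} (G : SimpleGraph (Fin n)) (i j : Fin n)
    (π : List (Fin n)) : Prop :=
  i < j ∧ π.Chain' G.Adj ∧ π.head? = some i ∧ π.getLast? = some j ∧ π.Nodup ∧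
  (∀ v ∈ π, v ≠ i → v ≠ j → (v < i ∨ j < v)) ∧
  ∀ π' : List (Fin n), π' ≠ π → π'.Sublist π → π'.head? = some i →
    π'.getLast? = some j → ¬ π'.Chain' G.Adj

/-- `u_π = (∏_{v ∈ π, v > j} x_v) (∏_{v ∈ π, v < i} y_v)` for a path `π` from `i` to `j`. -/
def uPath {n : ℕ} (i j : Fin n) (π : List (Fin n)) : MvPolynomial (Fin n ⊕ Fin n) K :=
  ((π.filter (fun v => j < v)).map (fun v => X (Sum.inl v))).prod *
  ((π.filter (fun v => v < i)).map (fun v => X (Sum.inr v))).prod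

/-- `Γ` is the reduced Gröbner basis of `I` with respect to the lexicographic order
`x_1 > ⋯ > x_n > y_1 > ⋯ > y_n`: `Γ ⊆ I`, all elements are monic, the leading monomials
of `Γ` generate the initial ideal of `I`, and no monomial of an element of `Γ` is
divisible by the leading monomial of another element. -/
def IsReducedGB {n : ℕ} (Γ : Set (MvPolynomial (Fin n ⊕ Fin n) K))
    (I : Ideal (MvPolynomial (Fin n ⊕ Fin n) K)) : Prop :=
  Γ ⊆ (I : Set (MvPolynomial (Fin n ⊕ Fin n) K)) ∧
  (∀ g ∈ Γ, g ≠ 0 ∧ MvPolynomial.coeff (leadExp K g) g = 1) ∧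
  initialIdeal K I = Ideal.span ((fun g => (monomial (leadExp K g) (1 : K))) '' Γ) ∧
  ∀ g ∈ Γ, ∀ g' ∈ Γ, g' ≠ g → ∀ m ∈ g.support, ¬ leadExp K g' ≤ m

end BinomialEdgeIdeals

noncomputable section AuxStmt0

variable {K : Type*} [Field K] {n : ℕ}

private lemma equivMapDomain_cancel {α β M : Type*} [Zero M] (e : α ≃ β) (f : α →₀ M) :
    Finsupp.equivMapDomain e.symm (Finsupp.equivMapDomain e f) = f := by
  ext x; simp

private lemma expLex_inj {a b : (Fin n ⊕ Fin n) →₀ ℕ} (h : expLex a = expLex b) : a = b := by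
  have := congrArg (fun z => Finsupp.equivMapDomain finSumFinEquiv.symm (ofLex z)) h
  simpa [expLex, equivMapDomain_cancel] using this

private lemma leadExp_spec (p : MvPolynomial (Fin n ⊕ Fin n) K) (hp : p ≠ 0) :
    leadExp K p ∈ p.support ∧ ∀ m ∈ p.support, expLex m ≤ expLex (leadExp K p) := by
  have hs : (p.support.image (fun m => expLex m)).Nonempty :=
    (support_nonempty.mpr hp).image _
  set s := p.support.image (fun m => expLex m) with hsdef
  have hmax : s.max = (s.max' hs : Lex (Fin (n + n) →₀ ℕ)) := (Finset.coe_max' hs).symm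
  obtain ⟨m0, hm0, hm0e⟩ := Finset.mem_image.mp (Finset.max'_mem s hs)
  have hl : leadExp K p = m0 := by
    rw [leadExp, ← hsdef, hmax, WithBot.unbotD_coe, ← hm0e]
    simp [expLex, equivMapDomain_cancel]
  constructor
  · rw [hl]; exact hm0
  · intro m hm
    have h1 : expLex m ≤ s.max' hs := Finset.le_max' s _ (Finset.mem_image_of_mem _ hm)
    have h2 : expLex (leadExp K p) = s.max' hs := by rw [hl, hm0e]
    rw [h2]; exact h1

/-- The substitution `x_i ↦ 0, y_i ↦ 0`. -/
def killV (i : Fin n) : MvPolynomial (Fin n ⊕ Fin n) K →ₐ[K] MvPolynomial (Fin n ⊕ Fin n) K :=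
  aeval (fun v => if v = Sum.inl i ∨ v = Sum.inr i then 0 else X v)

private lemma coeff_killV (i : Fin n) (p : MvPolynomial (Fin n ⊕ Fin n) K)
    (m : (Fin n ⊕ Fin n) →₀ ℕ) :
    coeff m (killV i p) =
      if m (Sum.inl i) = 0 ∧ m (Sum.inr i) = 0 then coeff m p else 0 := by
  induction p using MvPolynomial.induction_on' with
  | add p q hp hq =>
    rw [map_add, coeff_add, hp, hq, coeff_add]
    split <;> simp
  | monomial u a =>
    by_cases hu : u (Sum.inl i) = 0 ∧ u (Sum.inr i) = 0
    · have hk : killV i (monomial u a) = monomial u a := by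
        rw [killV, aeval_monomial]
        rw [Finsupp.prod_congr (g2 := fun v e => (X v : MvPolynomial (Fin n ⊕ Fin n) K) ^ e) ?_]
        · rw [algebraMap_eq, ← monomial_eq]
        · intro v hv
          have hv1 : v ≠ Sum.inl i := by
            rintro rfl; exact (Finsupp.mem_support_iff.mp hv) hu.1
          have hv2 : v ≠ Sum.inr i := by
            rintro rfl; exact (Finsupp.mem_support_iff.mp hv) hu.2
          rw [if_neg (by tauto)]
      rw [hk, coeff_monomial]
      split_ifs with h1 h2 <;> first | rfl | exact absurd (h1 ▸ hu) h2
    · obtain ⟨w, hw0, hwi⟩ : ∃ w, u w ≠ 0 ∧ (w = Sum.inl i ∨ w = Sum.inr i) := by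
        rcases not_and_or.mp hu with h | h
        · exact ⟨Sum.inl i, h, Or.inl rfl⟩
        · exact ⟨Sum.inr i, h, Or.inr rfl⟩
      have hk : killV i (monomial u a) = 0 := by
        rw [killV, aeval_monomial]
        have : (u.prod fun v e =>
            (if v = Sum.inl i ∨ v = Sum.inr i then 0 else X v : MvPolynomial (Fin n ⊕ Fin n) K) ^ e) = 0 :=
          Finset.prod_eq_zero (Finsupp.mem_support_iff.mpr hw0)
            (by simp only [if_pos hwi]; exact zero_pow hw0)
        rw [this, mul_zero]
      rw [hk, coeff_zero]
      split_ifs with h1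
      · rw [coeff_monomial, if_neg]
        rintro rfl; exact hu h1
      · rfl

private lemma killV_support_subset (i : Fin n) (p : MvPolynomial (Fin n ⊕ Fin n) K) :
    (killV i p).support ⊆ p.support := by
  intro m hm
  rw [mem_support_iff, coeff_killV] at hm
  rw [mem_support_iff]
  split_ifs at hm with h
  · exact hm
  · exact absurd rfl hm

private lemma killV_mem_beIdeal (G : SimpleGraph (Fin n)) (i : Fin n)
    {p : MvPolynomial (Fin n ⊕ Fin n) K} (hp : p ∈ beIdeal K G) :
    killV i p ∈ beIdeal K G := by
  have hmap : Ideal.map (killV (K := K) i).toRingHom (beIdeal K G) ≤ beIdeal K G := by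
    rw [beIdeal, Ideal.map_span, Ideal.span_le]
    rintro q ⟨f, ⟨j, k, hjk, hadj, rfl⟩, rfl⟩
    by_cases hj : j = i ∨ k = i
    · have h0 : killV (K := K) i (fij K j k) = 0 := by
        rcases hj with rfl | rfl <;> simp [fij, killV]
      show killV (K := K) i (fij K j k) ∈ beIdeal K G
      rw [h0]; exact zero_mem _
    · push_neg at hj
      have h0 : killV (K := K) i (fij K j k) = fij K j k := by
        simp [fij, killV, hj.1, hj.2]
      show killV (K := K) i (fij K j k) ∈ beIdeal K G
      rw [h0, beIdeal]
      exact Ideal.subset_span ⟨j, k, hjk, hadj, rfl⟩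
  exact hmap (Ideal.mem_map_of_mem _ hp)

private lemma killV_span_xy (i : Fin n) {g : MvPolynomial (Fin n ⊕ Fin n) K}
    (hg : g ∈ Ideal.span {X (Sum.inl i), X (Sum.inr i)}) : killV i g = 0 := by
  obtain ⟨a, b, rfl⟩ := Ideal.mem_span_pair.mp hg
  simp [killV]

end AuxStmt0

/-- For a simple graph `G` on `[n]` and `i ∈ [n]`, in the lex order
`x_1 > ⋯ > x_n > y_1 > ⋯ > y_n` one has `in(J_G, x_i, y_i) = (in(J_G), x_i, y_i)`. -/
theorem stmt0 (K : Type*) [Field K] (n : ℕ) (G : SimpleGraph (Fin n)) (i : Fin n) :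
    initialIdeal K (beIdeal K G + Ideal.span {X (Sum.inl i), X (Sum.inr i)}) =
      initialIdeal K (beIdeal K G) + Ideal.span {X (Sum.inl i), X (Sum.inr i)} := by
  classical
  have hIle : beIdeal K G ≤ beIdeal K G + Ideal.span {X (Sum.inl i), X (Sum.inr i)} := by
    rw [Ideal.add_eq_sup]; exact le_sup_left
  apply le_antisymm
  · rw [initialIdeal, Ideal.span_le]
    rintro q ⟨p, hpI, hp0, rfl⟩
    obtain ⟨hm_supp, hm_max⟩ := leadExp_spec p hp0
    set m := leadExp K p with hm
    by_cases hgood : m (Sum.inl i) = 0 ∧ m (Sum.inr i) = 0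
    · rw [Ideal.add_eq_sup] at hpI
      obtain ⟨f, hf, g, hg, rfl⟩ := Submodule.mem_sup.mp hpI
      have hφ : killV i (f + g) = killV i f := by
        rw [map_add, killV_span_xy i hg, add_zero]
      have hmem : killV i (f + g) ∈ beIdeal K G := hφ ▸ killV_mem_beIdeal G i hf
      have hm_supp' : m ∈ (killV i (f + g)).support := by
        rw [mem_support_iff, coeff_killV, if_pos hgood]
        exact mem_support_iff.mp hm_supp
      have hne : killV i (f + g) ≠ 0 := by
        intro h0; rw [h0] at hm_supp'; simp at hm_supp'
      obtain ⟨hq_supp, hq_max⟩ := leadExp_spec (killV i (f + g)) hne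
      have hle1 : expLex (leadExp K (killV i (f + g))) ≤ expLex m :=
        hm_max _ (killV_support_subset i (f + g) hq_supp)
      have hle2 : expLex m ≤ expLex (leadExp K (killV i (f + g))) := hq_max _ hm_supp'
      have heq : leadExp K (killV i (f + g)) = m := expLex_inj (le_antisymm hle1 hle2)
      have hgen : (monomial m (1 : K)) ∈ initialIdeal K (beIdeal K G) := by
        rw [initialIdeal]
        exact Ideal.subset_span ⟨killV i (f + g), hmem, hne, by rw [heq]⟩
      rw [Ideal.add_eq_sup]
      exact Submodule.mem_sup_left hgen
    · obtain ⟨w, hw, hwmem⟩ : ∃ w, m w ≠ 0 ∧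
          (X w : MvPolynomial (Fin n ⊕ Fin n) K) ∈
            Ideal.span {X (Sum.inl i), X (Sum.inr i)} := by
        rcases not_and_or.mp hgood with h | h
        · exact ⟨Sum.inl i, h, Ideal.subset_span (by simp)⟩
        · exact ⟨Sum.inr i, h, Ideal.subset_span (by simp)⟩
      have hmm : monomial m (1 : K) = monomial (m - Finsupp.single w 1) 1 * X w := by
        rw [X, monomial_mul, mul_one]
        congr 1
        have hle : Finsupp.single w 1 ≤ m := by
          rw [Finsupp.single_le_iff]
          exact Nat.one_le_iff_ne_zero.mpr hw
        rw [tsub_add_cancel_of_le hle]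
      rw [Ideal.add_eq_sup]
      exact Submodule.mem_sup_right (hmm ▸ Ideal.mul_mem_left _ _ hwmem)
  · rw [Ideal.add_eq_sup]
    apply sup_le
    · rw [initialIdeal, initialIdeal]
      apply Ideal.span_mono
      rintro q ⟨p, hp, hp0, rfl⟩
      exact ⟨p, hIle hp, hp0, rfl⟩
    · have key : ∀ w : Fin n ⊕ Fin n,
          (X w : MvPolynomial (Fin n ⊕ Fin n) K) ∈
            beIdeal K G + Ideal.span {X (Sum.inl i), X (Sum.inr i)} →
          (X w : MvPolynomial (Fin n ⊕ Fin n) K) ∈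
            initialIdeal K (beIdeal K G + Ideal.span {X (Sum.inl i), X (Sum.inr i)}) := by
        intro w hw
        have hX0 : (X w : MvPolynomial (Fin n ⊕ Fin n) K) ≠ 0 := X_ne_zero w
        have hlead : leadExp K (X w : MvPolynomial (Fin n ⊕ Fin n) K) = Finsupp.single w 1 := by
          have := (leadExp_spec (X w : MvPolynomial (Fin n ⊕ Fin n) K) hX0).1
          rwa [support_X, Finset.mem_singleton] at this
        rw [initialIdeal]
        refine Ideal.subset_span ⟨X w, hw, hX0, ?_⟩
        rw [hlead, X]
      rw [Ideal.span_le]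
      rintro q hq
      have hmem : q ∈ beIdeal K G + Ideal.span {X (Sum.inl i), X (Sum.inr i)} := by
        rw [Ideal.add_eq_sup]
        exact Submodule.mem_sup_right (Ideal.subset_span hq)
      rcases hq with rfl | hq
      · exact key _ hmem
      · rw [Set.mem_singleton_iff] at hq
        rw [hq] at hmem ⊢
        exact key _ hmem
end

section
/- The longest induced path of a C_ℓ-graph has length exactly ℓ. -/
open MvPolynomial SimpleGraph Classical
open scoped BigOperators

section Aux
variable {V : Type*} {G : SimpleGraph V} {ℓ : ℕ} {F : Fin ℓ → Finset V}

lemma aux_disj (hF : IsCliqueSeq G ℓ F) {a b : ℕ} (ha : a < ℓ) (hb : b < ℓ)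
    (hab : a + 2 ≤ b) : F ⟨a, ha⟩ ∩ F ⟨b, hb⟩ = ∅ :=
  hF.2.2.1 ⟨a, ha⟩ ⟨b, hb⟩ (by simp [Fin.lt_iff_val_lt_val]; omega) (by simp; omega)

lemma aux_not_both (hF : IsCliqueSeq G ℓ F) {a b : ℕ} (ha : a < ℓ) (hb : b < ℓ)
    (hab : a + 2 ≤ b) {c : V} (h1 : c ∈ F ⟨a, ha⟩) (h2 : c ∈ F ⟨b, hb⟩) : False := by
  have := aux_disj hF ha hb hab
  have hm : c ∈ F ⟨a, ha⟩ ∩ F ⟨b, hb⟩ := Finset.mem_inter.mpr ⟨h1, h2⟩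
  rw [this] at hm
  exact absurd hm (Finset.notMem_empty c)

lemma aux_memTwo (hF : IsCliqueSeq G ℓ F) {i m : ℕ} (hi : i + 1 < ℓ) (hm : m < ℓ) {c : V}
    (hc1 : c ∈ F ⟨i, by omega⟩) (hc2 : c ∈ F ⟨i + 1, hi⟩) (hcm : c ∈ F ⟨m, hm⟩) :
    m = i ∨ m = i + 1 := by
  by_contra hcon
  push_neg at hcon
  obtain ⟨h1, h2⟩ := hcon
  rcases Nat.lt_or_ge m i with h | h
  · by_cases hmi : m + 1 = i
    · exact aux_not_both hF hm hi (by omega) hcm hc2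
    · exact aux_not_both hF hm (by omega : i < ℓ) (by omega) hcm hc1
  · by_cases hmi : m = i + 2
    · exact aux_not_both hF (by omega : i < ℓ) hm (by omega) hc1 hcm
    · exact aux_not_both hF hi hm (by omega) hc2 hcm

lemma aux_cutUnique (hF : IsCliqueSeq G ℓ F) {i : ℕ} (hi : i + 1 < ℓ) {x y : V}
    (hx1 : x ∈ F ⟨i, by omega⟩) (hx2 : x ∈ F ⟨i + 1, hi⟩)
    (hy1 : y ∈ F ⟨i, by omega⟩) (hy2 : y ∈ F ⟨i + 1, hi⟩) : x = y := by
  have hcard := hF.2.1 ⟨i, by omega⟩ hi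
  have h1 : x ∈ F ⟨i, by omega⟩ ∩ F ⟨i + 1, hi⟩ := Finset.mem_inter.mpr ⟨hx1, hx2⟩
  have h2 : y ∈ F ⟨i, by omega⟩ ∩ F ⟨i + 1, hi⟩ := Finset.mem_inter.mpr ⟨hy1, hy2⟩
  exact Finset.card_le_one.mp (le_of_eq hcard) x h1 y h2

lemma aux_adjF (hF : IsCliqueSeq G ℓ F) {m : Fin ℓ} {x y : V} (hx : x ∈ F m)
    (hy : y ∈ F m) (hxy : x ≠ y) : G.Adj x y :=
  (hF.1 m).1.1 (Finset.mem_coe.mpr hx) (Finset.mem_coe.mpr hy) hxy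

lemma aux_two {a x y : V} (hx : G.Adj a x) (hy : G.Adj a y) (hxy : x ≠ y) :
    (G.neighborSet a).ncard ≠ 1 := by
  intro h
  obtain ⟨z, hz⟩ := Set.ncard_eq_one.mp h
  have h1 : x ∈ G.neighborSet a := hx
  have h2 : y ∈ G.neighborSet a := hy
  rw [hz, Set.mem_singleton_iff] at h1 h2
  exact hxy (h1.trans h2.symm)

lemma aux_edge (hF : IsCliqueSeq G ℓ F) {u v : V} (huv : G.Adj u v) :
    (∃ m : Fin ℓ, u ∈ F m ∧ v ∈ F m) ∨
    (∃ (i : ℕ) (hi : i + 1 < ℓ),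
      ((u ∈ F ⟨i, by omega⟩ ∧ u ∈ F ⟨i + 1, hi⟩ ∧ (G.neighborSet v).ncard = 1) ∨
       (v ∈ F ⟨i, by omega⟩ ∧ v ∈ F ⟨i + 1, hi⟩ ∧ (G.neighborSet u).ncard = 1))) := by
  rcases hF.2.2.2 s(u, v) (G.mem_edgeSet.mpr huv) with ⟨i, hall⟩ |
    ⟨jv, kv, i, hi, heq, hjv, hkv⟩
  · exact Or.inl ⟨i, hall u (by simp), hall v (by simp)⟩
  · right
    obtain ⟨hjv1, hjv2⟩ := Finset.mem_inter.mp hjv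
    refine ⟨i.val, hi, ?_⟩
    rcases Sym2.eq_iff.mp heq with ⟨h1, h2⟩ | ⟨h1, h2⟩
    · subst h1; subst h2
      exact Or.inl ⟨hjv1, hjv2, hkv⟩
    · subst h1; subst h2
      exact Or.inr ⟨hjv1, hjv2, hkv⟩

end Aux

section Upper
variable {V : Type*} {G : SimpleGraph V} {ℓ : ℕ} {F : Fin ℓ → Finset V}

lemma aux_upper (hF : IsCliqueSeq G ℓ F) (hl : 1 ≤ ℓ) {k : ℕ}
    (f : pathGraph (k + 1) ↪g G) : k ≤ ℓ := by
  by_contra hk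
  push_neg at hk
  set p : ℕ → V := fun n => f ⟨min n k, by omega⟩ with hp
  have hinj : ∀ a b : ℕ, a ≤ k → b ≤ k → p a = p b → a = b := by
    intro a b ha hb hab
    have h2 : min a k = min b k := congrArg Fin.val (f.injective hab)
    omega
  have hne : ∀ a b : ℕ, a ≤ k → b ≤ k → a ≠ b → p a ≠ p b :=
    fun a b ha hb hab h => hab (hinj a b ha hb h)
  have hadj : ∀ a b : ℕ, a ≤ k → b ≤ k →
      (G.Adj (p a) (p b) ↔ (a + 1 = b ∨ b + 1 = a)) := by
    intro a b ha hb
    rw [hp]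
    simp only [Embedding.map_adj_iff, pathGraph_adj, Fin.val_mk]
    omega
  have hlab : ∀ t : Fin k, ∃ m : Fin ℓ,
      (p t.val ∈ F m ∧ p (t.val + 1) ∈ F m) ∨
      ((¬ ∃ t', t' < k ∧ p t' ∈ F m ∧ p (t' + 1) ∈ F m) ∧
       ∃ (i : ℕ) (hi : i + 1 < ℓ), (m.val = i ∨ m.val = i + 1) ∧
         ((t.val = 0 ∧ p 1 ∈ F ⟨i, by omega⟩ ∧ p 1 ∈ F ⟨i + 1, hi⟩) ∨
          (t.val = k - 1 ∧ p (k - 1) ∈ F ⟨i, by omega⟩ ∧ p (k - 1) ∈ F ⟨i + 1, hi⟩))) := by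
    intro t
    have htk : t.val < k := t.isLt
    by_cases hCE : ∃ m : Fin ℓ, p t.val ∈ F m ∧ p (t.val + 1) ∈ F m
    · exact ⟨hCE.choose, Or.inl hCE.choose_spec⟩
    have hAdj : G.Adj (p t.val) (p (t.val + 1)) :=
      (hadj t.val (t.val + 1) (by omega) (by omega)).mpr (Or.inl rfl)
    rcases aux_edge hF hAdj with ⟨m, hm1, hm2⟩ | ⟨i, hi, hcase⟩
    · exact absurd ⟨m, hm1, hm2⟩ hCE
    have hk3 : 3 ≤ k := by omega
    rcases hcase with ⟨hc1, hc2, hdeg⟩ | ⟨hc1, hc2, hdeg⟩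
    · -- p t is the cut vertex, p (t+1) has degree 1, so t = k-1
      have ht1 : t.val = k - 1 := by
        by_contra h
        exact aux_two
          ((hadj (t.val + 1) t.val (by omega) (by omega)).mpr (Or.inr rfl))
          ((hadj (t.val + 1) (t.val + 2) (by omega) (by omega)).mpr (Or.inl rfl))
          (hne t.val (t.val + 2) (by omega) (by omega) (by omega)) hdeg
      have hcut1 : p (k - 1) ∈ F ⟨i, by omega⟩ := by
        have := hc1; rw [ht1] at this; exact this
      have hcut2 : p (k - 1) ∈ F ⟨i + 1, hi⟩ := by
        have := hc2; rw [ht1] at this; exact this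
      have huniq : ∀ n : Fin ℓ, (n.val = i ∨ n.val = i + 1) → ∀ t', t' < k →
          p t' ∈ F n → p (t' + 1) ∈ F n → t' = k - 2 := by
        intro n hn t' ht' h1 h2
        have hcn : p (k - 1) ∈ F n := by
          rcases hn with h | h
          · rw [show n = ⟨i, by omega⟩ from Fin.ext h]; exact hcut1
          · rw [show n = ⟨i + 1, hi⟩ from Fin.ext h]; exact hcut2
        by_cases he : p (t' + 1) = p (k - 1)
        · have := hinj (t' + 1) (k - 1) (by omega) (by omega) he; omega
        exfalso
        have hA := aux_adjF hF h2 hcn he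
        have h3 := (hadj (t' + 1) (k - 1) (by omega) (by omega)).mp hA
        rcases h3 with h3 | h3
        · -- t' + 2 = k - 1, i.e. t' = k - 3
          by_cases he2 : p t' = p (k - 1)
          · have := hinj t' (k - 1) (by omega) (by omega) he2; omega
          · have hA2 := aux_adjF hF h1 hcn he2
            have := (hadj t' (k - 1) (by omega) (by omega)).mp hA2
            omega
        · -- k = t' + 1, i.e. t' = k - 1 = t.val : contradicts hCE
          exact hCE ⟨n, by rw [ht1, show k - 1 = t' by omega]; exact h1,
            by rw [ht1, show k - 1 + 1 = t' + 1 by omega]; exact h2⟩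
      by_cases hused : ∃ t', t' < k ∧ p t' ∈ F ⟨i, by omega⟩ ∧ p (t' + 1) ∈ F ⟨i, by omega⟩
      · refine ⟨⟨i + 1, hi⟩, Or.inr ⟨?_, i, hi, Or.inr rfl,
          Or.inr ⟨ht1, hcut1, hcut2⟩⟩⟩
        rintro ⟨t₁, ht₁, hm1, hm2⟩
        obtain ⟨t₀, ht₀, h01, h02⟩ := hused
        have e1 := huniq ⟨i + 1, hi⟩ (Or.inr rfl) t₁ ht₁ hm1 hm2
        have e0 := huniq ⟨i, by omega⟩ (Or.inl rfl) t₀ ht₀ h01 h02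
        rw [e1] at hm1
        rw [e0] at h01
        have hcc : p (k - 2) = p (k - 1) := aux_cutUnique hF hi h01 hm1 hcut1 hcut2
        have := hinj (k - 2) (k - 1) (by omega) (by omega) hcc
        omega
      · exact ⟨⟨i, by omega⟩, Or.inr ⟨hused, i, hi, Or.inl rfl,
          Or.inr ⟨ht1, hcut1, hcut2⟩⟩⟩
    · -- p (t+1) is the cut vertex, p t has degree 1, so t = 0
      have ht1 : t.val = 0 := by
        by_contra h
        exact aux_two
          ((hadj t.val (t.val - 1) (by omega) (by omega)).mpr (Or.inr (by omega)))
          ((hadj t.val (t.val + 1) (by omega) (by omega)).mpr (Or.inl rfl))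
          (hne (t.val - 1) (t.val + 1) (by omega) (by omega) (by omega)) hdeg
      have hcut1 : p 1 ∈ F ⟨i, by omega⟩ := by
        have := hc1; rw [ht1] at this; simpa using this
      have hcut2 : p 1 ∈ F ⟨i + 1, hi⟩ := by
        have := hc2; rw [ht1] at this; simpa using this
      have huniq : ∀ n : Fin ℓ, (n.val = i ∨ n.val = i + 1) → ∀ t', t' < k →
          p t' ∈ F n → p (t' + 1) ∈ F n → t' = 1 := by
        intro n hn t' ht' h1 h2
        have hcn : p 1 ∈ F n := by
          rcases hn with h | h
          · rw [show n = ⟨i, by omega⟩ from Fin.ext h]; exact hcut1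
          · rw [show n = ⟨i + 1, hi⟩ from Fin.ext h]; exact hcut2
        by_cases he : p t' = p 1
        · exact hinj t' 1 (by omega) (by omega) he
        exfalso
        have hA := aux_adjF hF h1 hcn he
        have h3 := (hadj t' 1 (by omega) (by omega)).mp hA
        rcases h3 with h3 | h3
        · -- t' + 1 = 1, t' = 0 = t.val : contradicts hCE
          exact hCE ⟨n, by rw [ht1, show (0:ℕ) = t' by omega]; exact h1,
            by rw [ht1, show (0:ℕ) + 1 = t' + 1 by omega]; exact h2⟩
        · -- t' = 2
          by_cases he2 : p (t' + 1) = p 1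
          · have := hinj (t' + 1) 1 (by omega) (by omega) he2; omega
          · have hA2 := aux_adjF hF h2 hcn he2
            have := (hadj (t' + 1) 1 (by omega) (by omega)).mp hA2
            omega
      by_cases hused : ∃ t', t' < k ∧ p t' ∈ F ⟨i, by omega⟩ ∧ p (t' + 1) ∈ F ⟨i, by omega⟩
      · refine ⟨⟨i + 1, hi⟩, Or.inr ⟨?_, i, hi, Or.inr rfl,
          Or.inl ⟨ht1, hcut1, hcut2⟩⟩⟩
        rintro ⟨t₁, ht₁, hm1, hm2⟩
        obtain ⟨t₀, ht₀, h01, h02⟩ := hused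
        have e1 := huniq ⟨i + 1, hi⟩ (Or.inr rfl) t₁ ht₁ hm1 hm2
        have e0 := huniq ⟨i, by omega⟩ (Or.inl rfl) t₀ ht₀ h01 h02
        rw [e1, show (1:ℕ) + 1 = 2 from rfl] at hm2
        rw [e0, show (1:ℕ) + 1 = 2 from rfl] at h02
        have hcc : p 2 = p 1 := aux_cutUnique hF hi h02 hm2 hcut1 hcut2
        have := hinj 2 1 (by omega) (by omega) hcc
        omega
      · exact ⟨⟨i, by omega⟩, Or.inr ⟨hused, i, hi, Or.inl rfl,
          Or.inl ⟨ht1, hcut1, hcut2⟩⟩⟩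
  choose φ hφ using hlab
  have key : ∀ a b : Fin k, a.val < b.val → φ a = φ b →
      (p a.val ∈ F (φ a) ∧ p (a.val + 1) ∈ F (φ a)) →
      (p b.val ∈ F (φ b) ∧ p (b.val + 1) ∈ F (φ b)) → False := by
    rintro a b hab he ⟨ha1, _⟩ ⟨_, hb2⟩
    rw [he] at ha1
    have hb' : b.val < k := b.isLt
    have hne' : p a.val ≠ p (b.val + 1) :=
      hne a.val (b.val + 1) (by omega) (by omega) (by omega)
    have hA := aux_adjF hF ha1 hb2 hne'
    have := (hadj a.val (b.val + 1) (by omega) (by omega)).mp hA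
    omega
  have helper2 : ∀ (i j : ℕ) (hi : i + 1 < ℓ) (hj : j + 1 < ℓ) (m : Fin ℓ),
      (m.val = i ∨ m.val = i + 1) → (m.val = j ∨ m.val = j + 1) →
      p 1 ∈ F ⟨i, by omega⟩ → p 1 ∈ F ⟨i + 1, hi⟩ →
      p (k - 1) ∈ F ⟨j, by omega⟩ → p (k - 1) ∈ F ⟨j + 1, hj⟩ → False := by
    intro i j hi hj m hmi hmj h1a h1b h2a h2b
    have hp1 : p 1 ∈ F m := by
      rcases hmi with h | h
      · rw [show m = ⟨i, by omega⟩ from Fin.ext h]; exact h1a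
      · rw [show m = ⟨i + 1, hi⟩ from Fin.ext h]; exact h1b
    have hp2 : p (k - 1) ∈ F m := by
      rcases hmj with h | h
      · rw [show m = ⟨j, by omega⟩ from Fin.ext h]; exact h2a
      · rw [show m = ⟨j + 1, hj⟩ from Fin.ext h]; exact h2b
    have hk3 : 3 ≤ k := by omega
    have hne12 : p 1 ≠ p (k - 1) := hne 1 (k - 1) (by omega) (by omega) (by omega)
    have hA := aux_adjF hF hp1 hp2 hne12
    have hcons := (hadj 1 (k - 1) (by omega) (by omega)).mp hA
    have hk3' : k = 3 := by omega
    have hi0 : i = 0 := by omega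
    have hj0 : j = 0 := by omega
    subst hi0; subst hj0
    exact hne12 (aux_cutUnique hF hi h1a h1b h2a h2b)
  have hφinj : Function.Injective φ := by
    intro a b he
    by_contra hne''
    have hab : a.val ≠ b.val := fun h => hne'' (Fin.ext h)
    rcases hφ a with h1 | h1 <;> rcases hφ b with h2 | h2
    · exfalso
      rcases Nat.lt_or_ge a.val b.val with h | h
      · exact key a b h he h1 h2
      · exact key b a (by omega) he.symm h2 h1
    · exact absurd ⟨a.val, a.isLt, by rw [← he]; exact h1.1, by rw [← he]; exact h1.2⟩ h2.1
    · exact absurd ⟨b.val, b.isLt, by rw [he]; exact h2.1, by rw [he]; exact h2.2⟩ h1.1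
    · exfalso
      obtain ⟨hnu1, i, hi, hmi, hc1⟩ := h1
      obtain ⟨hnu2, j, hj, hmj, hc2⟩ := h2
      rw [← he] at hmj
      rcases hc1 with ⟨ha0, hA1, hA2⟩ | ⟨ha0, hA1, hA2⟩ <;>
        rcases hc2 with ⟨hb0, hB1, hB2⟩ | ⟨hb0, hB1, hB2⟩
      · exact hab (ha0.trans hb0.symm)
      · exact helper2 i j hi hj (φ a) hmi hmj hA1 hA2 hB1 hB2
      · exact helper2 j i hj hi (φ a) hmj hmi hB1 hB2 hA1 hA2
      · exact hab (ha0.trans hb0.symm)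
  have hcard := Fintype.card_le_of_injective φ hφinj
  simp only [Fintype.card_fin] at hcard
  omega

end Upper

section Lower
variable {V : Type*} {G : SimpleGraph V} {ℓ : ℕ} {F : Fin ℓ → Finset V}

lemma aux_lower1 (hF : IsCliqueSeq G ℓ F) (hl : ℓ = 1) :
    Nonempty (pathGraph (ℓ + 1) ↪g G) := by
  subst hl
  obtain ⟨x, hx, y, hy, hxy⟩ := Finset.one_lt_card.mp (hF.1 0).2
  have hAdj : G.Adj x y := aux_adjF hF hx hy hxy
  refine ⟨⟨⟨fun t => if t.val = 0 then x else y, ?_⟩, ?_⟩⟩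
  · intro a b hab
    fin_cases a <;> fin_cases b <;> simp_all
  · intro a b
    simp only [Function.Embedding.coeFn_mk, pathGraph_adj]
    fin_cases a <;> fin_cases b <;> simp_all
    exact hAdj.symm

lemma aux_lower2 (hF : IsCliqueSeq G ℓ F) (hG : G.Connected) (hl : 2 ≤ ℓ) :
    Nonempty (pathGraph (ℓ + 1) ↪g G) := by
  haveI : Nonempty V := hG.nonempty
  have hcut0 : ∀ i : ℕ, ∃ v : V, ∀ hi : i + 1 < ℓ,
      v ∈ F ⟨i, by omega⟩ ∧ v ∈ F ⟨i + 1, hi⟩ := by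
    intro i
    by_cases hi : i + 1 < ℓ
    · have hcard := hF.2.1 ⟨i, by omega⟩ hi
      obtain ⟨v, hv⟩ := Finset.card_eq_one.mp hcard
      have hvm : v ∈ F ⟨i, by omega⟩ ∩ F ⟨i + 1, hi⟩ := by
        rw [hv]; exact Finset.mem_singleton_self v
      exact ⟨v, fun _ => Finset.mem_inter.mp hvm⟩
    · exact ⟨Classical.arbitrary V, fun h => absurd h hi⟩
  choose cut hcut using hcut0
  obtain ⟨a0, ha0F, ha0⟩ := Finset.exists_mem_ne
    (show 1 < (F ⟨0, by omega⟩).card from by have := (hF.1 ⟨0, by omega⟩).2; omega)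
    (cut 0)
  obtain ⟨al, halF, hal⟩ := Finset.exists_mem_ne
    (show 1 < (F ⟨ℓ - 1, by omega⟩).card from by have := (hF.1 ⟨ℓ - 1, by omega⟩).2; omega)
    (cut (ℓ - 2))
  set w : ℕ → V := fun t => if t = 0 then a0 else if t < ℓ then cut (t - 1) else al
    with hw
  have Fmk : ∀ (a b : ℕ) (ha : a < ℓ) (hb : b < ℓ), a = b → F ⟨a, ha⟩ = F ⟨b, hb⟩ := by
    intro a b ha hb h; subst h; rfl
  have hw0 : w 0 = a0 := by simp [hw]
  have hwm : ∀ t, 1 ≤ t → t < ℓ → w t = cut (t - 1) := by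
    intro t h1 h2
    have h0 : ¬ (t = 0) := by omega
    simp [hw, h0, h2]
  have hwl : w ℓ = al := by
    have h0 : ¬ (ℓ = 0) := by omega
    have h1 : ¬ (ℓ < ℓ) := by omega
    simp [hw, h0, h1]
  -- membership characterization
  have mw : ∀ t, t ≤ ℓ → ∀ m : Fin ℓ, (w t ∈ F m ↔ (m.val = t ∨ m.val + 1 = t)) := by
    intro t ht m
    constructor
    · intro hmem
      by_cases ht0 : t = 0
      · subst ht0
        rw [hw0] at hmem
        left
        by_contra hm0
        by_cases hm1 : m.val = 1
        · have hcs := hcut 0 (by omega)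
          have h1 : a0 ∈ F ⟨0 + 1, by omega⟩ := by
            rw [Fmk (0+1) m.val (by omega) m.isLt (by omega), Fin.eta]; exact hmem
          exact ha0 (aux_cutUnique hF (show 0 + 1 < ℓ by omega) ha0F h1 hcs.1 hcs.2)
        · exact aux_not_both hF (by omega : 0 < ℓ) m.isLt (by omega) ha0F
            (by rw [Fin.eta]; exact hmem)
      by_cases htl : t = ℓ
      · rw [htl] at hmem ⊢
        rw [hwl] at hmem
        right
        by_contra hm0
        by_cases hm1 : m.val = ℓ - 2
        · have hcs := hcut (ℓ - 2) (by omega)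
          have h1 : al ∈ F ⟨ℓ - 2, by omega⟩ := by
            rw [Fmk (ℓ-2) m.val (by omega) m.isLt (by omega), Fin.eta]; exact hmem
          have h2 : al ∈ F ⟨ℓ - 2 + 1, by omega⟩ := by
            rw [Fmk (ℓ-2+1) (ℓ-1) (by omega) (by omega) (by omega)]; exact halF
          exact hal (aux_cutUnique hF (show ℓ - 2 + 1 < ℓ by omega) h1 h2 hcs.1 hcs.2)
        · have hml : m.val + 2 ≤ ℓ - 1 := by omega
          exact aux_not_both hF m.isLt (by omega : ℓ - 1 < ℓ) hml
            (by rw [Fin.eta]; exact hmem) halF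
      -- 1 ≤ t ≤ ℓ - 1
      · rw [hwm t (by omega) (by omega)] at hmem
        have hcs := hcut (t - 1) (by omega)
        have := aux_memTwo hF (show t - 1 + 1 < ℓ by omega) m.isLt hcs.1 hcs.2
          (by rw [Fin.eta]; exact hmem)
        omega
    · intro hm
      by_cases ht0 : t = 0
      · subst ht0
        rw [hw0]
        rw [show m = ⟨0, by omega⟩ from Fin.ext (show m.val = 0 by omega)]
        exact ha0F
      by_cases htl : t = ℓ
      · rw [htl] at hm ⊢
        rw [hwl]
        rw [show m = ⟨ℓ - 1, by omega⟩ from Fin.ext (show m.val = ℓ - 1 by omega)]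
        exact halF
      · rw [hwm t (by omega) (by omega)]
        have hcs := hcut (t - 1) (by omega)
        rcases hm with hm | hm
        · rw [show m = ⟨t - 1 + 1, by omega⟩ from Fin.ext (show m.val = t - 1 + 1 by omega)]
          exact hcs.2
        · rw [show m = ⟨t - 1, by omega⟩ from Fin.ext (show m.val = t - 1 by omega)]
          exact hcs.1
  -- injectivity
  have winj : ∀ s t, s ≤ ℓ → t ≤ ℓ → w s = w t → s = t := by
    have key : ∀ s t, s < t → t ≤ ℓ → w s = w t → False := by
      intro s t hst ht hws
      by_cases hs0 : s = 0
      · subst hs0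
        have h1 : w t ∈ F ⟨0, by omega⟩ := by rw [← hws, hw0]; exact ha0F
        have h2 := (mw t ht ⟨0, by omega⟩).mp h1
        have ht1 : t = 1 := by
          rcases h2 with h2 | h2 <;> [skip; skip] <;>
            · rw [show ((⟨0, by omega⟩ : Fin ℓ)).val = 0 from rfl] at h2; omega
        subst ht1
        have h3 : w 0 ∈ F ⟨1, by omega⟩ := by
          rw [hws]
          exact (mw 1 (by omega) ⟨1, by omega⟩).mpr (Or.inl rfl)
        have h4 := (mw 0 (by omega) ⟨1, by omega⟩).mp h3
        rw [show ((⟨1, by omega⟩ : Fin ℓ)).val = 1 from rfl] at h4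
        omega
      · have h1 : w s ∈ F ⟨s - 1, by omega⟩ :=
          (mw s (by omega) ⟨s - 1, by omega⟩).mpr (Or.inr (show s - 1 + 1 = s by omega))
        rw [hws] at h1
        have h2 := (mw t ht ⟨s - 1, by omega⟩).mp h1
        rw [show ((⟨s - 1, by omega⟩ : Fin ℓ)).val = s - 1 from rfl] at h2
        omega
    intro s t hs ht hws
    rcases Nat.lt_trichotomy s t with h | h | h
    · exact absurd hws (fun hh => key s t h ht hh)
    · exact h
    · exact absurd hws.symm (fun hh => key t s h hs hh)
  -- consecutive adjacency
  have wadj_cons : ∀ s, s + 1 ≤ ℓ → G.Adj (w s) (w (s + 1)) := by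
    intro s hs
    have h1 : w s ∈ F ⟨s, by omega⟩ := (mw s (by omega) _).mpr (Or.inl rfl)
    have h2 : w (s + 1) ∈ F ⟨s, by omega⟩ := (mw (s + 1) (by omega) _).mpr (Or.inr rfl)
    exact aux_adjF hF h1 h2
      (fun hh => by have := winj s (s + 1) (by omega) (by omega) hh; omega)
  -- no long adjacency
  have wadj_far : ∀ s t, t ≤ ℓ → s + 2 ≤ t → ¬ G.Adj (w s) (w t) := by
    intro s t ht hst hA
    rcases aux_edge hF hA with ⟨m, hm1, hm2⟩ | ⟨i, hi, hcase⟩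
    · have e1 := (mw s (by omega) m).mp hm1
      have e2 := (mw t ht m).mp hm2
      omega
    · rcases hcase with ⟨-, -, hdeg⟩ | ⟨-, -, hdeg⟩
      · -- w t has degree 1
        by_cases htl : t = ℓ
        · have h5 := (wadj_cons (t - 1) (by omega)).symm
          rw [show t - 1 + 1 = t by omega] at h5
          refine aux_two hA.symm h5 ?_ hdeg
          intro hh
          have := winj s (t - 1) (by omega) (by omega) hh
          omega
        · have h5 := (wadj_cons (t - 1) (by omega)).symm
          rw [show t - 1 + 1 = t by omega] at h5
          refine aux_two (wadj_cons t (by omega)) h5 ?_ hdeg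
          intro hh
          have := winj (t + 1) (t - 1) (by omega) (by omega) hh
          omega
      · -- w s has degree 1
        by_cases hs0 : s = 0
        · subst hs0
          refine aux_two (wadj_cons 0 (by omega)) hA ?_ hdeg
          intro hh
          have := winj 1 t (by omega) (by omega) hh
          omega
        · have h5 := (wadj_cons (s - 1) (by omega)).symm
          rw [show s - 1 + 1 = s by omega] at h5
          refine aux_two (wadj_cons s (by omega)) h5 ?_ hdeg
          intro hh
          have := winj (s + 1) (s - 1) (by omega) (by omega) hh
          omega
  refine ⟨⟨⟨fun t => w t.val, ?_⟩, ?_⟩⟩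
  · intro a b hab
    exact Fin.ext (winj a.val b.val (by omega) (by omega) hab)
  · intro a b
    simp only [Function.Embedding.coeFn_mk, pathGraph_adj]
    constructor
    · intro hA
      by_contra hcon
      push_neg at hcon
      have ha : a.val ≤ ℓ := by omega
      have hb : b.val ≤ ℓ := by omega
      rcases Nat.lt_trichotomy a.val b.val with h | h | h
      · exact wadj_far a.val b.val hb (by omega) hA
      · exact G.irrefl (by rw [show a = b from Fin.ext h] at hA; exact hA)
      · exact wadj_far b.val a.val ha (by omega) hA.symm
    · intro hc
      rcases hc with hc | hc
      · have h5 := wadj_cons a.val (by omega)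
        rw [hc] at h5
        exact h5
      · have h5 := (wadj_cons b.val (by omega)).symm
        rw [hc] at h5
        exact h5

end Lower

section Main

/-- The longest induced path of a `C_ℓ`-graph has length exactly `ℓ`. -/
theorem stmt6 {V : Type*} (ℓ : ℕ) (G : SimpleGraph V) (h : IsCLGraph G ℓ) :
    LongestInducedPathLen G ℓ := by
  obtain ⟨hconn, F, hF⟩ := h
  rcases Nat.eq_zero_or_pos ℓ with hz | hpos
  · subst hz
    have hnoadj : ∀ a b : V, ¬ G.Adj a b := by
      intro a b hab
      rcases hF.2.2.2 s(a, b) (G.mem_edgeSet.mpr hab) with ⟨i, -⟩ | ⟨-, -, i, -⟩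
      · exact i.elim0
      · exact i.elim0
    haveI : Nonempty V := hconn.nonempty
    constructor
    · exact ⟨⟨⟨fun _ => Classical.arbitrary V, fun a b _ => Fin.ext (by omega)⟩,
        fun {a b} => ⟨fun h' => absurd h' (hnoadj _ _),
          fun h' => absurd (Fin.ext (by omega) : a = b) h'.ne⟩⟩⟩
    · rintro k ⟨f⟩
      by_contra hknz
      have hadj01 : (pathGraph (k + 1)).Adj ⟨0, by omega⟩ ⟨1, by omega⟩ :=
        pathGraph_adj.mpr (Or.inl rfl)
      exact hnoadj _ _ (f.map_adj_iff.mpr hadj01)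
  · constructor
    · rcases Nat.lt_or_ge ℓ 2 with h2 | h2
      · exact aux_lower1 hF (by omega)
      · exact aux_lower2 hF hconn h2
    · rintro k ⟨f⟩
      exact aux_upper hF hpos f

end Main
end

section
/- Let G be a connected graph on [n] and S ⊂ [n]. The prime ideal P_S(G) = ({x_i, y_i : i ∈ S}) + J_{\tilde{G_1}} + ... + J_{\tilde{G}_{c(S)}} is a minimal prime of J_G if and only if S = ∅, or S ≠ ∅ and for each i ∈ S one has c(S \ {i}) < c(S), where c(S) is the number of connected components of the induced subgraph on [n] \ S and \tilde{G_j} is the complete graph on the vertex set of the j-th component. -/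
open MvPolynomial SimpleGraph Classical
open scoped BigOperators

noncomputable section Stmt10Aux

open MvPolynomial SimpleGraph Classical

variable {K : Type*} [Field K] {n : ℕ}

namespace Stmt10

/-! ### Basic identities for `fij` -/

lemma fij_self (a : Fin n) : fij K a a = 0 := by simp [fij]

lemma fij_swap (a b : Fin n) : fij K b a = - fij K a b := by simp only [fij]; ring

lemma identX (a b c : Fin n) :
    X (Sum.inl c) * fij K a b =
      X (Sum.inl a) * fij K c b + X (Sum.inl b) * fij K a c := by
  simp only [fij]; ring

lemma identY (a b c : Fin n) :
    X (Sum.inr c) * fij K a b =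
      X (Sum.inr a) * fij K c b + X (Sum.inr b) * fij K a c := by
  simp only [fij]; ring

lemma mem_beIdeal_of_adj {G : SimpleGraph (Fin n)} {a b : Fin n} (h : G.Adj a b) :
    fij K a b ∈ beIdeal K G := by
  rcases lt_trichotomy a b with hab | hab | hab
  · exact Ideal.subset_span ⟨a, b, hab, h, rfl⟩
  · exact absurd hab h.ne
  · rw [show fij K a b = - fij K b a by rw [fij_swap]]
    exact neg_mem (Ideal.subset_span ⟨b, a, hab, h.symm, rfl⟩)

/-! ### Membership in `cutPrime` -/

variable {G : SimpleGraph (Fin n)} {T : Set (Fin n)}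

lemma X_inl_mem_cutPrime {i : Fin n} (hi : i ∈ T) :
    X (Sum.inl i) ∈ cutPrime K G T :=
  Ideal.subset_span (Or.inl ⟨i, hi, Or.inl rfl⟩)

lemma X_inr_mem_cutPrime {i : Fin n} (hi : i ∈ T) :
    X (Sum.inr i) ∈ cutPrime K G T :=
  Ideal.subset_span (Or.inl ⟨i, hi, Or.inr rfl⟩)

lemma fij_mem_cutPrime {a b : Fin n} (ha : a ∉ T) (hb : b ∉ T)
    (h : (delVerts G T).Reachable a b) : fij K a b ∈ cutPrime K G T := by
  rcases lt_trichotomy a b with hab | hab | hab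
  · exact Ideal.subset_span (Or.inr ⟨a, b, hab, ha, hb, h, rfl⟩)
  · subst hab; rw [fij_self]; exact zero_mem _
  · rw [show fij K a b = - fij K b a by rw [fij_swap]]
    exact neg_mem (Ideal.subset_span (Or.inr ⟨b, a, hab, hb, ha, h.symm, rfl⟩))

lemma fij_mem_cutPrime_of_left {i : Fin n} (hi : i ∈ T) (j : Fin n) :
    fij K i j ∈ cutPrime K G T := by
  have : fij K i j = X (Sum.inr j) * X (Sum.inl i) - X (Sum.inl j) * X (Sum.inr i) := by
    simp [fij]; ring
  rw [this]
  exact sub_mem (Ideal.mul_mem_left _ _ (X_inl_mem_cutPrime hi))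
    (Ideal.mul_mem_left _ _ (X_inr_mem_cutPrime hi))

lemma fij_mem_cutPrime_of_right {j : Fin n} (hj : j ∈ T) (i : Fin n) :
    fij K i j ∈ cutPrime K G T := by
  rw [show fij K i j = - fij K j i by rw [fij_swap]]
  exact neg_mem (fij_mem_cutPrime_of_left hj i)

lemma beIdeal_le_cutPrime : beIdeal K G ≤ cutPrime K G T := by
  rw [beIdeal, Ideal.span_le]
  rintro f ⟨i, j, hij, hadj, rfl⟩
  by_cases hi : i ∈ T
  · exact fij_mem_cutPrime_of_left hi j
  by_cases hj : j ∈ T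
  · exact fij_mem_cutPrime_of_right hj i
  · exact fij_mem_cutPrime hi hj (SimpleGraph.Adj.reachable ⟨hadj, hi, hj⟩)



/-! ### Exclusion lemmas via evaluation -/

lemma eval_cutPrime_zero (xv yv : Fin n → K)
    (h1 : ∀ i ∈ T, xv i = 0) (h2 : ∀ i ∈ T, yv i = 0)
    (h3 : ∀ a b : Fin n, a ∉ T → b ∉ T → (delVerts G T).Reachable a b →
      xv a * yv b = xv b * yv a) :
    ∀ p ∈ cutPrime K G T, eval (Sum.elim xv yv) p = 0 := by
  intro p hp
  have : cutPrime K G T ≤ RingHom.ker (eval (Sum.elim xv yv)) := by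
    rw [cutPrime, Ideal.span_le]
    rintro q (⟨i, hi, rfl | rfl⟩ | ⟨a, b, hab, ha, hb, hr, rfl⟩)
    · simp [RingHom.mem_ker, h1 _ hi]
    · simp [RingHom.mem_ker, h2 _ hi]
    · simp only [SetLike.mem_coe, RingHom.mem_ker, fij, map_sub, map_mul, eval_X, Sum.elim_inl, Sum.elim_inr]
      rw [h3 a b ha hb hr]; ring
  exact this hp

lemma X_inl_not_mem_cutPrime {c : Fin n} (hc : c ∉ T) :
    X (Sum.inl c) ∉ cutPrime K G T := by
  intro h
  have := eval_cutPrime_zero (G := G) (fun v => if v ∈ T then 0 else 1) (fun _ => 0)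
    (by intro i hi; simp [hi]) (by intro i hi; rfl)
    (by intro a b _ _ _; simp) _ h
  simp [hc] at this

lemma X_inr_not_mem_cutPrime {c : Fin n} (hc : c ∉ T) :
    X (Sum.inr c) ∉ cutPrime K G T := by
  intro h
  have := eval_cutPrime_zero (G := G) (fun _ => 0) (fun v => if v ∈ T then 0 else 1)
    (by intro i hi; rfl) (by intro i hi; simp [hi])
    (by intro a b _ _ _; simp) _ h
  simp [hc] at this

lemma fij_not_mem_cutPrime {a b : Fin n} (ha : a ∉ T) (hb : b ∉ T)
    (hr : ¬ (delVerts G T).Reachable a b) : fij K a b ∉ cutPrime K G T := by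
  intro h
  have := eval_cutPrime_zero (G := G)
    (fun v => if v ∉ T ∧ (delVerts G T).Reachable a v then 1 else 0)
    (fun v => if v ∉ T then 1 else 0)
    (by intro i hi; simp [hi]) (by intro i hi; simp [hi])
    (by
      intro u v hu hv huv
      have : (delVerts G T).Reachable a u ↔ (delVerts G T).Reachable a v :=
        ⟨fun h => h.trans huv, fun h => h.trans huv.symm⟩
      simp [hu, hv, this])
    _ h
  rw [fij] at this
  simp only [map_sub, map_mul, eval_X, Sum.elim_inl, Sum.elim_inr] at this
  rw [if_pos ⟨ha, Reachable.refl a⟩, if_pos hb, if_neg (by tauto)] at this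
  simp at this

/-! ### Reachability lemmas -/

lemma rch_ne_not_mem {a b : Fin n} (h : (delVerts G T).Reachable a b) (hab : a ≠ b) :
    a ∉ T := by
  obtain ⟨w⟩ := h
  cases w with
  | nil => exact absurd rfl hab
  | cons h _ => exact h.2.1
lemma delVerts_le {T' : Set (Fin n)} (hTT : T' ⊆ T) : delVerts G T ≤ delVerts G T' := by
  intro u v huv
  exact ⟨huv.1, fun hu => huv.2.1 (hTT hu), fun hv => huv.2.2 (hTT hv)⟩


lemma rch_mono {T' : Set (Fin n)} (hTT : T' ⊆ T) {a b : Fin n}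
    (h : (delVerts G T).Reachable a b) : (delVerts G T').Reachable a b :=
  Reachable.mono (delVerts_le hTT) h

/-- Transfer of reachability from `G ∖ (T \ {i})` to `G ∖ T` when all neighbours of `i`
outside `T` are mutually reachable in `G ∖ T`. -/
lemma reach_del {i : Fin n}
    (H : ∀ a b : Fin n, a ∉ T → b ∉ T → G.Adj i a → G.Adj i b →
      (delVerts G T).Reachable a b) :
    ∀ (N : ℕ) (a b : Fin n) (w : (delVerts G (T \ {i})).Walk a b), w.length ≤ N →
      a ∉ T → b ∉ T → (delVerts G T).Reachable a b := by
  intro N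
  induction N with
  | zero =>
    intro a b w hw ha hb
    cases w with
    | nil => exact Reachable.refl a
    | cons h w => simp [SimpleGraph.Walk.length_cons] at hw
  | succ N ih =>
    intro a b w hw ha hb
    cases w with
    | nil => exact Reachable.refl a
    | @cons _ c _ h w =>
      by_cases hc : c ∈ T
      · have hci : c = i := by
          have := h.2.2
          simp only [Set.mem_diff, Set.mem_singleton_iff, not_and, not_not] at this
          exact this hc
        subst hci
        cases w with
        | nil => exact absurd hc hb
        | @cons _ d _ h2 w2 =>
          have hd : d ∉ T := by
            have hdne : d ≠ c := h2.1.ne'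
            have := h2.2.2
            simp only [Set.mem_diff, Set.mem_singleton_iff, not_and, not_not] at this
            intro hdT; exact hdne (this hdT)
          have had : (delVerts G T).Reachable a d :=
            H a d ha hd h.1.symm h2.1
          have : (delVerts G T).Reachable d b := by
            apply ih d b w2 _ hd hb
            simp only [SimpleGraph.Walk.length_cons] at hw
            omega
          exact had.trans this
      · have : (delVerts G T).Reachable c b := by
          apply ih c b w _ hc hb
          simp only [SimpleGraph.Walk.length_cons] at hw
          omega
        have hadj : (delVerts G T).Adj a c := ⟨h.1, ha, hc⟩
        exact hadj.reachable.trans this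

/-- Bridge: reachability in the induced subgraph vs in `delVerts`. -/
lemma induce_reach_of_del {a b : Fin n} (w : (delVerts G T).Walk a b) :
    ∀ (ha : a ∈ Tᶜ) (hb : b ∈ Tᶜ), (G.induce Tᶜ).Reachable ⟨a, ha⟩ ⟨b, hb⟩ := by
  induction w with
  | nil => intro ha hb; rfl
  | @cons u c v h w ih =>
    intro ha hb
    have hc : c ∈ Tᶜ := h.2.2
    exact (SimpleGraph.Adj.reachable
      (by exact h.1 : (G.induce Tᶜ).Adj ⟨u, ha⟩ ⟨c, hc⟩)).trans (ih hc hb)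

lemma reach_induce_iff {a b : Fin n} (ha : a ∈ Tᶜ) (hb : b ∈ Tᶜ) :
    (G.induce Tᶜ).Reachable ⟨a, ha⟩ ⟨b, hb⟩ ↔ (delVerts G T).Reachable a b := by
  constructor
  · intro h
    exact h.map
      { toFun := Subtype.val,
        map_rel' := fun {u v} huv => show (delVerts G T).Adj u.1 v.1 from ⟨huv, u.2, v.2⟩ }
  · intro h
    obtain ⟨w⟩ := h
    exact induce_reach_of_del w ha hb

/-! ### Component-counting lemmas -/

lemma mem_compl_diff {i : Fin n} : (Tᶜ : Set (Fin n)) ⊆ (T \ {i})ᶜ := by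
  intro x hx
  simp only [Set.mem_compl_iff, Set.mem_diff, Set.mem_singleton_iff, not_and, not_not] at *
  exact fun h => absurd h hx

/-- The natural homomorphism from `G` induced on `Tᶜ` to `G` induced on `(T \ {i})ᶜ`. -/
def ihom (G : SimpleGraph (Fin n)) (T : Set (Fin n)) (i : Fin n) :
    (G.induce Tᶜ) →g (G.induce (T \ {i})ᶜ) where
  toFun := fun v => ⟨v.1, mem_compl_diff v.2⟩
  map_rel' := fun {u v} h => h

lemma card_comp_le {G : SimpleGraph (Fin n)} {T : Set (Fin n)} {i : Fin n}
    (H : ∀ a b : Fin n, a ∉ T → b ∉ T → G.Adj i a → G.Adj i b →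
      (delVerts G T).Reachable a b) :
    numComp G T ≤ numComp G (T \ {i}) := by
  apply Nat.card_le_card_of_injective (ConnectedComponent.map (ihom G T i))
  intro C D
  refine ConnectedComponent.ind₂ (fun u v h => ?_) C D
  obtain ⟨a, ha⟩ := u
  obtain ⟨b, hb⟩ := v
  rw [ConnectedComponent.map_mk, ConnectedComponent.map_mk, ConnectedComponent.eq] at h
  rw [ConnectedComponent.eq]
  have hr : (delVerts G (T \ {i})).Reachable a b := by
    rw [← reach_induce_iff (mem_compl_diff ha) (mem_compl_diff hb)]
    exact h
  obtain ⟨w⟩ := hr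
  have := reach_del H w.length a b w le_rfl ha hb
  rw [reach_induce_iff ha hb]
  exact this

lemma card_comp_lt {G : SimpleGraph (Fin n)} {T : Set (Fin n)} {i : Fin n} (hi : i ∈ T)
    {a b : Fin n} (ha : a ∉ T) (hb : b ∉ T)
    (hia : G.Adj i a) (hib : G.Adj i b) (hnr : ¬ (delVerts G T).Reachable a b) :
    numComp G (T \ {i}) < numComp G T := by
  classical
  have hii : i ∈ ((T \ {i})ᶜ : Set (Fin n)) := by simp
  haveI : Fintype ((G.induce Tᶜ).ConnectedComponent) := Fintype.ofFinite _
  haveI : Fintype ((G.induce (T \ {i})ᶜ).ConnectedComponent) := Fintype.ofFinite _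
  rw [numComp, numComp, Nat.card_eq_fintype_card, Nat.card_eq_fintype_card]
  apply Fintype.card_lt_of_surjective_not_injective (ConnectedComponent.map (ihom G T i))
  · -- surjective
    intro D
    refine ConnectedComponent.ind (fun v => ?_) D
    obtain ⟨v, hv⟩ := v
    by_cases hvT : v ∈ T
    · have hvi : v = i := by
        simp only [Set.mem_compl_iff, Set.mem_diff, Set.mem_singleton_iff, not_and,
          not_not] at hv
        exact hv hvT
      subst hvi
      refine ⟨(G.induce Tᶜ).connectedComponentMk ⟨a, ha⟩, ?_⟩
      rw [ConnectedComponent.map_mk, ConnectedComponent.eq]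
      exact (SimpleGraph.Adj.reachable
        (show (G.induce (T \ {v})ᶜ).Adj ⟨a, _⟩ ⟨v, hv⟩ from hia.symm))
    · exact ⟨(G.induce Tᶜ).connectedComponentMk ⟨v, hvT⟩, rfl⟩
  · -- not injective
    intro hinj
    have hab : a ∈ ((T \ {i})ᶜ : Set (Fin n)) := mem_compl_diff ha
    have hbb : b ∈ ((T \ {i})ᶜ : Set (Fin n)) := mem_compl_diff hb
    have h1 : ConnectedComponent.map (ihom G T i) ((G.induce Tᶜ).connectedComponentMk ⟨a, ha⟩)
        = ConnectedComponent.map (ihom G T i) ((G.induce Tᶜ).connectedComponentMk ⟨b, hb⟩) := by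
      rw [ConnectedComponent.map_mk, ConnectedComponent.map_mk, ConnectedComponent.eq]
      exact (SimpleGraph.Adj.reachable
        (show (G.induce (T \ {i})ᶜ).Adj ⟨a, hab⟩ ⟨i, hii⟩ from hia.symm)).trans
        (SimpleGraph.Adj.reachable
          (show (G.induce (T \ {i})ᶜ).Adj ⟨i, hii⟩ ⟨b, hbb⟩ from hib))
    have := hinj h1
    rw [ConnectedComponent.eq, reach_induce_iff] at this
    exact hnr this
/-! ### The representative function and the homomorphism `phiT` -/

variable (G T) in
/-- Canonical representative of the `delVerts G T`-reachability class. -/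
def repv (i : Fin n) : Fin n :=
  (Finset.univ.filter fun j => (delVerts G T).Reachable i j).min'
    ⟨i, Finset.mem_filter.mpr ⟨Finset.mem_univ i, Reachable.refl i⟩⟩

lemma repv_reachable (i : Fin n) : (delVerts G T).Reachable i (repv G T i) := by
  have := Finset.min'_mem (Finset.univ.filter fun j => (delVerts G T).Reachable i j)
    ⟨i, Finset.mem_filter.mpr ⟨Finset.mem_univ i, Reachable.refl i⟩⟩
  exact (Finset.mem_filter.mp this).2

lemma repv_eq_of_reachable {i j : Fin n} (h : (delVerts G T).Reachable i j) :
    repv G T i = repv G T j := by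
  have hset : (Finset.univ.filter fun x => (delVerts G T).Reachable i x)
      = (Finset.univ.filter fun x => (delVerts G T).Reachable j x) := by
    ext x
    simp only [Finset.mem_filter, Finset.mem_univ, true_and]
    exact ⟨fun hx => h.symm.trans hx, fun hx => h.trans hx⟩
  unfold repv
  congr 1

lemma reachable_of_repv_eq {a b : Fin n} (h : repv G T a = repv G T b) :
    (delVerts G T).Reachable a b :=
  (repv_reachable (G := G) (T := T) a).trans (h ▸ (repv_reachable (G := G) (T := T) b).symm)

variable (K G T) in
/-- The monomial substitution defining `phiT`. -/
def gT : Fin n ⊕ Fin n → MvPolynomial (Fin n ⊕ (Fin n ⊕ Fin n)) K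
  | Sum.inl i => if i ∈ T then 0 else
      X (Sum.inr (Sum.inl (repv G T i))) * X (Sum.inl i)
  | Sum.inr i => if i ∈ T then 0 else
      X (Sum.inr (Sum.inr (repv G T i))) * X (Sum.inl i)

variable (K G T) in
/-- The homomorphism realizing `S / P_T` inside a polynomial ring. -/
def phiT : MvPolynomial (Fin n ⊕ Fin n) K →+* MvPolynomial (Fin n ⊕ (Fin n ⊕ Fin n)) K :=
  eval₂Hom C (gT K G T)

lemma cutPrime_le_ker_phi : cutPrime K G T ≤ RingHom.ker (phiT K G T) := by
  rw [cutPrime, Ideal.span_le]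
  rintro q (⟨i, hi, rfl | rfl⟩ | ⟨a, b, hab, ha, hb, hr, rfl⟩)
  · simp [SetLike.mem_coe, RingHom.mem_ker, phiT, gT, hi]
  · simp [SetLike.mem_coe, RingHom.mem_ker, phiT, gT, hi]
  · simp only [SetLike.mem_coe, RingHom.mem_ker, phiT, fij, map_sub, map_mul,
      coe_eval₂Hom, eval₂_X]
    show gT K G T (Sum.inl a) * gT K G T (Sum.inr b)
        - gT K G T (Sum.inl b) * gT K G T (Sum.inr a) = 0
    simp only [gT, if_neg ha, if_neg hb]
    rw [repv_eq_of_reachable hr]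
    ring

variable (G T) in
/-- Exponent vector of the image of a variable under `phiT`. -/
def Evar : Fin n ⊕ Fin n → ((Fin n ⊕ (Fin n ⊕ Fin n)) →₀ ℕ)
  | Sum.inl i => Finsupp.single (Sum.inr (Sum.inl (repv G T i))) 1
      + Finsupp.single (Sum.inl i) 1
  | Sum.inr i => Finsupp.single (Sum.inr (Sum.inr (repv G T i))) 1
      + Finsupp.single (Sum.inl i) 1

lemma gT_inl {i : Fin n} (hi : i ∉ T) :
    gT K G T (Sum.inl i) = monomial (Evar G T (Sum.inl i)) 1 := by
  rw [show gT K G T (Sum.inl i)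
      = X (Sum.inr (Sum.inl (repv G T i))) * X (Sum.inl i) by simp [gT, hi]]
  rw [X, X, monomial_mul, one_mul, Evar]

lemma gT_inr {i : Fin n} (hi : i ∉ T) :
    gT K G T (Sum.inr i) = monomial (Evar G T (Sum.inr i)) 1 := by
  rw [show gT K G T (Sum.inr i)
      = X (Sum.inr (Sum.inr (repv G T i))) * X (Sum.inl i) by simp [gT, hi]]
  rw [X, X, monomial_mul, one_mul, Evar]

lemma prod_monomial {σ τ : Type*} (s : Finset σ) (f : σ → (τ →₀ ℕ)) :
    (∏ v ∈ s, (monomial (f v) (1 : K))) = monomial (∑ v ∈ s, f v) 1 := by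
  classical
  induction s using Finset.induction with
  | empty => simp
  | @insert a s h ih => rw [Finset.prod_insert h, Finset.sum_insert h, ih, monomial_mul, one_mul]

variable (G T) in
/-- The exponent vector of the image of a monomial under `phiT`. -/
def PhiE (m : (Fin n ⊕ Fin n) →₀ ℕ) : (Fin n ⊕ (Fin n ⊕ Fin n)) →₀ ℕ :=
  m.sum fun v k => k • Evar G T v

lemma phi_monomial (m : (Fin n ⊕ Fin n) →₀ ℕ) (c : K)
    (hm : ∀ i ∈ T, m (Sum.inl i) = 0 ∧ m (Sum.inr i) = 0) :
    phiT K G T (monomial m c) = monomial (PhiE G T m) c := by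
  have h1 : phiT K G T (monomial m c) = eval₂ C (gT K G T) (monomial m c) := rfl
  rw [h1, eval₂_monomial, Finsupp.prod]
  have h2 : ∀ v ∈ m.support, gT K G T v ^ m v = monomial ((m v) • Evar G T v) 1 := by
    intro v hv
    have hv0 : m v ≠ 0 := Finsupp.mem_support_iff.mp hv
    cases v with
    | inl i =>
      have hi : i ∉ T := fun hiT => hv0 (hm i hiT).1
      rw [gT_inl hi, monomial_pow, one_pow]
    | inr i =>
      have hi : i ∉ T := fun hiT => hv0 (hm i hiT).2
      rw [gT_inr hi, monomial_pow, one_pow]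
  rw [Finset.prod_congr rfl h2, prod_monomial, C_mul_monomial, mul_one, PhiE, Finsupp.sum]

lemma PhiE_inl (m : (Fin n ⊕ Fin n) →₀ ℕ) (i : Fin n) :
    PhiE G T m (Sum.inl i) = m (Sum.inl i) + m (Sum.inr i) := by
  rw [PhiE, Finsupp.sum_fintype _ _ (fun v => by simp)]
  rw [Finsupp.finset_sum_apply]
  rw [Fintype.sum_sum_type]
  have hl : ∀ j : Fin n, ((m (Sum.inl j)) • Evar G T (Sum.inl j)) (Sum.inl i)
      = if j = i then m (Sum.inl j) else 0 := by
    intro j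
    simp [Evar, Finsupp.single_apply]
  have hr : ∀ j : Fin n, ((m (Sum.inr j)) • Evar G T (Sum.inr j)) (Sum.inl i)
      = if j = i then m (Sum.inr j) else 0 := by
    intro j
    simp [Evar, Finsupp.single_apply]
  rw [Finset.sum_congr rfl (fun j _ => hl j), Finset.sum_congr rfl (fun j _ => hr j)]
  simp
lemma PhiE_s (m : (Fin n ⊕ Fin n) →₀ ℕ) (c : Fin n) :
    PhiE G T m (Sum.inr (Sum.inl c)) =
      ∑ j : Fin n, (if repv G T j = c then m (Sum.inl j) else 0) := by
  rw [PhiE, Finsupp.sum_fintype _ _ (fun v => by simp)]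
  rw [Finsupp.finset_sum_apply]
  rw [Fintype.sum_sum_type]
  have hl : ∀ j : Fin n, ((m (Sum.inl j)) • Evar G T (Sum.inl j)) (Sum.inr (Sum.inl c))
      = if repv G T j = c then m (Sum.inl j) else 0 := by
    intro j
    simp [Evar, Finsupp.single_apply]
  have hr : ∀ j : Fin n, ((m (Sum.inr j)) • Evar G T (Sum.inr j)) (Sum.inr (Sum.inl c))
      = 0 := by
    intro j
    simp [Evar, Finsupp.single_apply]
  rw [Finset.sum_congr rfl (fun j _ => hl j), Finset.sum_congr rfl (fun j _ => hr j)]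
  simp

lemma PhiE_t (m : (Fin n ⊕ Fin n) →₀ ℕ) (c : Fin n) :
    PhiE G T m (Sum.inr (Sum.inr c)) =
      ∑ j : Fin n, (if repv G T j = c then m (Sum.inr j) else 0) := by
  rw [PhiE, Finsupp.sum_fintype _ _ (fun v => by simp)]
  rw [Finsupp.finset_sum_apply]
  rw [Fintype.sum_sum_type]
  have hl : ∀ j : Fin n, ((m (Sum.inl j)) • Evar G T (Sum.inl j)) (Sum.inr (Sum.inr c))
      = 0 := by
    intro j
    simp [Evar, Finsupp.single_apply]
  have hr : ∀ j : Fin n, ((m (Sum.inr j)) • Evar G T (Sum.inr j)) (Sum.inr (Sum.inr c))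
      = if repv G T j = c then m (Sum.inr j) else 0 := by
    intro j
    simp [Evar, Finsupp.single_apply]
  rw [Finset.sum_congr rfl (fun j _ => hl j), Finset.sum_congr rfl (fun j _ => hr j)]
  simp
/-! ### Normal forms and primality of `cutPrime` -/

variable (G T) in
/-- A "standard" monomial with respect to `P_T`. -/
def IsGood (m : (Fin n ⊕ Fin n) →₀ ℕ) : Prop :=
  (∀ i ∈ T, m (Sum.inl i) = 0 ∧ m (Sum.inr i) = 0) ∧
  (∀ a b : Fin n, a < b → (delVerts G T).Reachable a b →
    m (Sum.inl b) ≠ 0 → m (Sum.inr a) = 0)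

lemma good_key {m m' : (Fin n ⊕ Fin n) →₀ ℕ} (hm : IsGood G T m)
    (hγ : ∀ i, m (Sum.inl i) + m (Sum.inr i) = m' (Sum.inl i) + m' (Sum.inr i))
    (hA : ∀ c, (∑ j : Fin n, if repv G T j = c then m (Sum.inl j) else 0)
      = ∑ j : Fin n, if repv G T j = c then m' (Sum.inl j) else 0)
    {a : Fin n} (hlt : m (Sum.inl a) < m' (Sum.inl a))
    (hmin : ∀ v, v < a → m (Sum.inl v) = m' (Sum.inl v)) : False := by
  have hba : m (Sum.inr a) ≠ 0 := by have := hγ a; omega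
  have hsum : (∑ j : Fin n, if repv G T j = repv G T a then m (Sum.inl j) else 0)
      < ∑ j : Fin n, if repv G T j = repv G T a then m' (Sum.inl j) else 0 := by
    apply Finset.sum_lt_sum
    · intro j _
      rcases lt_trichotomy j a with hj | hj | hj
      · rw [hmin j hj]
      · subst hj
        split
        · exact le_of_lt hlt
        · exact le_rfl
      · split_ifs with hrj
        · have hreach : (delVerts G T).Reachable a j :=
            reachable_of_repv_eq (by rw [hrj])
          by_cases hj0 : m (Sum.inl j) = 0
          · rw [hj0]; exact Nat.zero_le _
          · exact absurd (hm.2 a j hj hreach hj0) hba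
        · exact le_rfl
    · exact ⟨a, Finset.mem_univ a, by rw [if_pos rfl, if_pos rfl]; exact hlt⟩
  exact absurd (hA (repv G T a)) (ne_of_lt hsum)

lemma good_inj {m m' : (Fin n ⊕ Fin n) →₀ ℕ} (hm : IsGood G T m) (hm' : IsGood G T m')
    (h : PhiE G T m = PhiE G T m') : m = m' := by
  have hγ : ∀ i, m (Sum.inl i) + m (Sum.inr i) = m' (Sum.inl i) + m' (Sum.inr i) := by
    intro i; rw [← PhiE_inl (G := G) (T := T), ← PhiE_inl (G := G) (T := T), h]
  have hA : ∀ c, (∑ j : Fin n, if repv G T j = c then m (Sum.inl j) else 0)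
      = ∑ j : Fin n, if repv G T j = c then m' (Sum.inl j) else 0 := by
    intro c; rw [← PhiE_s, ← PhiE_s, h]
  have hinl : ∀ i, m (Sum.inl i) = m' (Sum.inl i) := by
    by_contra hne
    push_neg at hne
    obtain ⟨i0, hi0⟩ := hne
    have hne' : (Finset.univ.filter
        fun v : Fin n => m (Sum.inl v) ≠ m' (Sum.inl v)).Nonempty :=
      ⟨i0, by simp [hi0]⟩
    set a := Finset.min' _ hne' with ha
    have haa : m (Sum.inl a) ≠ m' (Sum.inl a) := by
      have := Finset.min'_mem _ hne'
      rw [← ha] at this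
      exact (Finset.mem_filter.mp this).2
    have hmin : ∀ v, v < a → m (Sum.inl v) = m' (Sum.inl v) := by
      intro v hv
      by_contra hvne
      exact absurd (Finset.min'_le _ v (Finset.mem_filter.mpr ⟨Finset.mem_univ v, hvne⟩))
        (by rw [← ha]; omega)
    rcases lt_or_gt_of_ne haa with h1 | h1
    · exact good_key hm hγ hA h1 hmin
    · exact good_key hm' (fun i => (hγ i).symm) (fun c => (hA c).symm) h1
        (fun v hv => (hmin v hv).symm)
  ext v
  cases v with
  | inl i => exact hinl i
  | inr i => have := hγ i; have := hinl i; omega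

/-- The lexicographic measure used in the reduction to normal form. -/
def mu (m : (Fin n ⊕ Fin n) →₀ ℕ) : ℕ := ∑ i : Fin n, i.val * m (Sum.inl i)

lemma mu_add_inl (p : (Fin n ⊕ Fin n) →₀ ℕ) (v : Fin n) :
    mu (p + Finsupp.single (Sum.inl v) 1) = mu p + v.val := by
  unfold mu
  simp only [Finsupp.add_apply, Finsupp.single_apply, mul_add]
  rw [Finset.sum_add_distrib]
  congr 1
  simp [Sum.inl.injEq, eq_comm]

lemma mu_add_inr (p : (Fin n ⊕ Fin n) →₀ ℕ) (v : Fin n) :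
    mu (p + Finsupp.single (Sum.inr v) 1) = mu p := by
  unfold mu
  simp [Finsupp.add_apply, Finsupp.single_apply]

lemma monomial_factor (m : (Fin n ⊕ Fin n) →₀ ℕ) (v : Fin n ⊕ Fin n) (hv : m v ≠ 0) :
    monomial m (1 : K) = monomial (m - Finsupp.single v 1) 1 * X v := by
  have hs : m - Finsupp.single v 1 + Finsupp.single v 1 = m := by
    have hv1 : 1 ≤ m v := Nat.one_le_iff_ne_zero.mpr hv
    ext w
    simp only [Finsupp.add_apply, Finsupp.tsub_apply, Finsupp.single_apply]
    split_ifs with h1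
    · subst h1; omega
    · omega
  rw [X, monomial_mul, one_mul, hs]

lemma swap_identity (a b : Fin n) (m'' : (Fin n ⊕ Fin n) →₀ ℕ) :
    monomial (m'' + Finsupp.single (Sum.inl b) 1 + Finsupp.single (Sum.inr a) 1) (1 : K)
      - monomial (m'' + Finsupp.single (Sum.inl a) 1 + Finsupp.single (Sum.inr b) 1) 1
      = monomial m'' 1 * (- fij K a b) := by
  have h1 : - fij K a b
      = X (Sum.inl b) * X (Sum.inr a) - X (Sum.inl a) * X (Sum.inr b) := by
    rw [fij]; ring
  rw [h1, mul_sub, X, X, X, X, monomial_mul, monomial_mul, monomial_mul, monomial_mul]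
  simp [add_assoc]

lemma reduce (m : (Fin n ⊕ Fin n) →₀ ℕ) :
    (monomial m (1 : K) ∈ cutPrime K G T) ∨
      ∃ m', IsGood G T m' ∧ monomial m 1 - monomial m' 1 ∈ cutPrime K G T := by
  suffices H : ∀ (N : ℕ) (m : (Fin n ⊕ Fin n) →₀ ℕ), mu m = N →
      (monomial m (1 : K) ∈ cutPrime K G T) ∨
      ∃ m', IsGood G T m' ∧ monomial m 1 - monomial m' 1 ∈ cutPrime K G T from
    H (mu m) m rfl
  intro N
  induction N using Nat.strong_induction_on with
  | _ N ih =>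
    intro m hmu
    by_cases hT : ∃ i ∈ T, m (Sum.inl i) ≠ 0 ∨ m (Sum.inr i) ≠ 0
    · obtain ⟨i, hiT, hi⟩ := hT
      left
      rcases hi with h | h
      · rw [monomial_factor m (Sum.inl i) h]
        exact Ideal.mul_mem_left _ _ (X_inl_mem_cutPrime hiT)
      · rw [monomial_factor m (Sum.inr i) h]
        exact Ideal.mul_mem_left _ _ (X_inr_mem_cutPrime hiT)
    · by_cases hbad : ∃ a b : Fin n, a < b ∧ (delVerts G T).Reachable a b ∧
          m (Sum.inl b) ≠ 0 ∧ m (Sum.inr a) ≠ 0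
      · obtain ⟨a, b, hab, hr, hb0, ha0⟩ := hbad
        have ha : a ∉ T := rch_ne_not_mem hr hab.ne
        have hb : b ∉ T := rch_ne_not_mem hr.symm hab.ne'
        have hb1 : 1 ≤ m (Sum.inl b) := Nat.one_le_iff_ne_zero.mpr hb0
        have ha1 : 1 ≤ m (Sum.inr a) := Nat.one_le_iff_ne_zero.mpr ha0
        obtain ⟨m'', hmeq⟩ : ∃ m'', m = m'' + Finsupp.single (Sum.inl b) 1
            + Finsupp.single (Sum.inr a) 1 := by
          refine ⟨m - Finsupp.single (Sum.inl b) 1 - Finsupp.single (Sum.inr a) 1, ?_⟩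
          ext w
          simp only [Finsupp.add_apply, Finsupp.tsub_apply, Finsupp.single_apply]
          split_ifs with h1 h2 h2
          · rw [← h2] at h1; exact absurd h1 (by simp)
          · subst h1; omega
          · subst h2; omega
          · omega
        have hdiff : monomial m (1 : K)
            - monomial (m'' + Finsupp.single (Sum.inl a) 1 + Finsupp.single (Sum.inr b) 1) 1
            ∈ cutPrime K G T := by
          rw [hmeq, swap_identity]
          exact Ideal.mul_mem_left _ _ (neg_mem (fij_mem_cutPrime ha hb hr))
        have hmu2 : mu (m'' + Finsupp.single (Sum.inl a) 1 + Finsupp.single (Sum.inr b) 1)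
            < N := by
          have e1 : mu m = mu m'' + b.val := by rw [hmeq, mu_add_inr, mu_add_inl]
          have e2 : mu (m'' + Finsupp.single (Sum.inl a) 1 + Finsupp.single (Sum.inr b) 1)
              = mu m'' + a.val := by rw [mu_add_inr, mu_add_inl]
          have hv : a.val < b.val := hab
          omega
        rcases ih _ hmu2 (m'' + Finsupp.single (Sum.inl a) 1 + Finsupp.single (Sum.inr b) 1)
            rfl with h | ⟨m', hgood, hmem⟩
        · left
          have hsplit : monomial m (1 : K) = (monomial m 1
              - monomial (m'' + Finsupp.single (Sum.inl a) 1 + Finsupp.single (Sum.inr b) 1) 1)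
              + monomial (m'' + Finsupp.single (Sum.inl a) 1 + Finsupp.single (Sum.inr b) 1) 1 := by
            ring
          rw [hsplit]
          exact add_mem hdiff h
        · right
          refine ⟨m', hgood, ?_⟩
          have hsplit : monomial m (1 : K) - monomial m' 1
              = (monomial m 1
              - monomial (m'' + Finsupp.single (Sum.inl a) 1 + Finsupp.single (Sum.inr b) 1) 1)
              + (monomial (m'' + Finsupp.single (Sum.inl a) 1 + Finsupp.single (Sum.inr b) 1) 1
                - monomial m' 1) := by
            ring
          rw [hsplit]
          exact add_mem hdiff hmem
      · right
        push_neg at hT hbad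
        refine ⟨m, ⟨hT, hbad⟩, ?_⟩
        rw [sub_self]
        exact zero_mem _

lemma ker_phi_le : RingHom.ker (phiT K G T) ≤ cutPrime K G T := by
  intro p hp
  classical
  have hex : ∀ m : (Fin n ⊕ Fin n) →₀ ℕ, ∃ r : MvPolynomial (Fin n ⊕ Fin n) K,
      (monomial m (1 : K) - r ∈ cutPrime K G T) ∧
      (r = 0 ∨ ∃ m', IsGood G T m' ∧ r = monomial m' 1) := by
    intro m
    rcases reduce (K := K) (G := G) (T := T) m with h | ⟨m', h1, h2⟩
    · exact ⟨0, by rwa [sub_zero], Or.inl rfl⟩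
    · exact ⟨monomial m' 1, h2, Or.inr ⟨m', h1, rfl⟩⟩
  choose red hred1 hred2 using hex
  set q := ∑ m ∈ p.support, C (coeff m p) * red m with hqdef
  have hpq : p - q ∈ cutPrime K G T := by
    have hp' : p = ∑ m ∈ p.support, C (coeff m p) * monomial m 1 := by
      conv_lhs => rw [p.as_sum]
      exact Finset.sum_congr rfl fun m _ => by rw [C_mul_monomial, mul_one]
    rw [hp', hqdef, ← Finset.sum_sub_distrib]
    apply Ideal.sum_mem
    intro m _
    rw [← mul_sub]
    exact Ideal.mul_mem_left _ _ (hred1 m)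
  have hqker : phiT K G T q = 0 := by
    have h1 : phiT K G T (p - q) = 0 := cutPrime_le_ker_phi hpq
    have h2 : phiT K G T p = 0 := hp
    rw [map_sub, h2, zero_sub, neg_eq_zero] at h1
    exact h1
  have hqsupp : ∀ m ∈ q.support, IsGood G T m := by
    classical
    intro m hm
    rw [hqdef] at hm
    have hmem := MvPolynomial.support_sum hm
    rw [Finset.mem_biUnion] at hmem
    obtain ⟨m0, _, hmm⟩ := hmem
    rcases hred2 m0 with h0 | ⟨m', hgood, hr⟩
    · rw [h0] at hmm
      simp at hmm
    · rw [hr, C_mul_monomial, mul_one] at hmm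
      have hsub := MvPolynomial.support_monomial_subset hmm
      rw [Finset.mem_singleton] at hsub
      rwa [hsub]
  have hq0 : q = 0 := by
    by_contra h0
    obtain ⟨m0, hm0⟩ := MvPolynomial.support_nonempty.mpr h0
    have hφq : phiT K G T q = ∑ m ∈ q.support, monomial (PhiE G T m) (coeff m q) := by
      conv_lhs => rw [q.as_sum]
      rw [map_sum]
      exact Finset.sum_congr rfl fun m hm => phi_monomial m _ ((hqsupp m hm).1)
    have hc := congrArg (coeff (PhiE G T m0)) hqker
    rw [hφq, MvPolynomial.coeff_sum] at hc
    rw [Finset.sum_eq_single m0 (fun m hm hne => by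
        rw [MvPolynomial.coeff_monomial,
          if_neg (fun he => hne (good_inj (hqsupp m hm) (hqsupp m0 hm0) he))])
      (fun hn => absurd hm0 hn)] at hc
    rw [MvPolynomial.coeff_monomial, if_pos rfl, MvPolynomial.coeff_zero] at hc
    exact (MvPolynomial.mem_support_iff.mp hm0) hc
  rw [hq0, sub_zero] at hpq
  exact hpq

lemma cutPrime_eq_ker : cutPrime K G T = RingHom.ker (phiT K G T) :=
  le_antisymm cutPrime_le_ker_phi ker_phi_le

lemma cutPrime_isPrime : (cutPrime K G T).IsPrime := by
  rw [cutPrime_eq_ker (G := G) (T := T)]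
  exact RingHom.ker_isPrime _
/-! ### Chasing generators into primes between `J_G` and `P_T` -/

lemma fij_mem_prime_of_walk {q : Ideal (MvPolynomial (Fin n ⊕ Fin n) K)}
    (hq : q.IsPrime) (hbe : beIdeal K G ≤ q) (hle : q ≤ cutPrime K G T) :
    ∀ {a b : Fin n}, (delVerts G T).Walk a b → fij K a b ∈ q := by
  intro a b w
  induction w with
  | nil => rw [fij_self]; exact zero_mem _
  | @cons a c b h w ih =>
    have h1 : fij K a c ∈ q := hbe (mem_beIdeal_of_adj h.1)
    have hcx : X (Sum.inl c) ∉ q := fun hc => X_inl_not_mem_cutPrime h.2.2 (hle hc)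
    have hmem : X (Sum.inl c) * fij K a b ∈ q := by
      rw [identX]
      exact add_mem (Ideal.mul_mem_left _ _ ih) (Ideal.mul_mem_left _ _ h1)
    rcases hq.mem_or_mem hmem with h' | h'
    · exact absurd h' hcx
    · exact h'

lemma gens_mem_prime {q : Ideal (MvPolynomial (Fin n ⊕ Fin n) K)}
    (hq : q.IsPrime) (hbe : beIdeal K G ≤ q) (hle : q ≤ cutPrime K G T)
    {i : Fin n} {a b : Fin n} (ha : a ∉ T) (hb : b ∉ T)
    (hia : G.Adj i a) (hib : G.Adj i b)
    (hnr : ¬ (delVerts G T).Reachable a b) :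
    X (Sum.inl i) ∈ q ∧ X (Sum.inr i) ∈ q := by
  have hfab : fij K a b ∉ q := fun hh => fij_not_mem_cutPrime ha hb hnr (hle hh)
  have hfia : fij K i a ∈ q := hbe (mem_beIdeal_of_adj hia)
  have hfib : fij K i b ∈ q := hbe (mem_beIdeal_of_adj hib)
  have hfai : fij K a i ∈ q := by
    have : fij K a i = - fij K i a := fij_swap i a
    rw [this]
    exact neg_mem hfia
  constructor
  · have hmem : X (Sum.inl i) * fij K a b ∈ q := by
      rw [identX]
      exact add_mem (Ideal.mul_mem_left _ _ hfib) (Ideal.mul_mem_left _ _ hfai)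
    rcases hq.mem_or_mem hmem with h' | h'
    · exact h'
    · exact absurd h' hfab
  · have hmem : X (Sum.inr i) * fij K a b ∈ q := by
      rw [identY]
      exact add_mem (Ideal.mul_mem_left _ _ hfib) (Ideal.mul_mem_left _ _ hfai)
    rcases hq.mem_or_mem hmem with h' | h'
    · exact h'
    · exact absurd h' hfab

lemma exists_pair {G : SimpleGraph (Fin n)} {T : Set (Fin n)} {i : Fin n} (hi : i ∈ T)
    (h : numComp G (T \ {i}) < numComp G T) :
    ∃ a b : Fin n, a ∉ T ∧ b ∉ T ∧ G.Adj i a ∧ G.Adj i b ∧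
      ¬ (delVerts G T).Reachable a b := by
  by_contra hno
  push_neg at hno
  exact absurd (card_comp_le (i := i) hno) (by omega)

end Stmt10
end Stmt10Aux

/-- For a connected `G` and `T ⊆ [n]`, `P_T(G)` is a minimal prime of
`J_G` iff `T = ∅`, or `T ≠ ∅` and `c(T ∖ {i}) < c(T)` for each `i ∈ T`. -/
theorem stmt10 (K : Type*) [Field K] (n : ℕ) (G : SimpleGraph (Fin n))
    (hG : G.Connected) (T : Set (Fin n)) :
    cutPrime K G T ∈ (beIdeal K G).minimalPrimes ↔
      (T = ∅ ∨ (T ≠ ∅ ∧ ∀ i ∈ T, numComp G (T \ {i}) < numComp G T)) := by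
  open Stmt10 in
  constructor
  · intro hmin
    by_cases hT : T = ∅
    · exact Or.inl hT
    refine Or.inr ⟨hT, fun i hi => ?_⟩
    by_contra hlt
    push_neg at hlt
    have Hk : ∀ a b : Fin n, a ∉ T → b ∉ T → G.Adj i a → G.Adj i b →
        (delVerts G T).Reachable a b := by
      intro a b ha hb hia hib
      by_contra hnr
      exact absurd (Stmt10.card_comp_lt hi ha hb hia hib hnr) (by omega)
    have hsub : cutPrime K G (T \ {i}) ≤ cutPrime K G T := by
      refine Ideal.span_le.mpr ?_
      rintro p (⟨j, hj, rfl | rfl⟩ | ⟨a, b, hab, ha, hb, hr, rfl⟩)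
      · exact Stmt10.X_inl_mem_cutPrime hj.1
      · exact Stmt10.X_inr_mem_cutPrime hj.1
      · by_cases hai : a = i
        · subst hai; exact Stmt10.fij_mem_cutPrime_of_left hi b
        by_cases hbi : b = i
        · subst hbi; exact Stmt10.fij_mem_cutPrime_of_right hi a
        have haT : a ∉ T := fun h => ha ⟨h, hai⟩
        have hbT : b ∉ T := fun h => hb ⟨h, hbi⟩
        obtain ⟨w⟩ := hr
        exact Stmt10.fij_mem_cutPrime haT hbT (Stmt10.reach_del Hk w.length a b w le_rfl haT hbT)
    have hmono := hmin.2 ⟨Stmt10.cutPrime_isPrime, Stmt10.beIdeal_le_cutPrime⟩ hsub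
    exact Stmt10.X_inl_not_mem_cutPrime (T := T \ {i}) (by simp)
      (hmono (Stmt10.X_inl_mem_cutPrime hi))
  · intro hrhs
    refine ⟨⟨Stmt10.cutPrime_isPrime, Stmt10.beIdeal_le_cutPrime⟩, ?_⟩
    intro q hq hqle
    refine Ideal.span_le.mpr ?_
    rintro p (⟨j, hj, rfl | rfl⟩ | ⟨a, b, hab, ha, hb, hr, rfl⟩)
    · rcases hrhs with rfl | ⟨hTne, hcut⟩
      · exact absurd hj (Set.notMem_empty j)
      obtain ⟨a, b, ha, hb, hia, hib, hnr⟩ := Stmt10.exists_pair hj (hcut j hj)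
      exact (Stmt10.gens_mem_prime hq.1 hq.2 hqle ha hb hia hib hnr).1
    · rcases hrhs with rfl | ⟨hTne, hcut⟩
      · exact absurd hj (Set.notMem_empty j)
      obtain ⟨a, b, ha, hb, hia, hib, hnr⟩ := Stmt10.exists_pair hj (hcut j hj)
      exact (Stmt10.gens_mem_prime hq.1 hq.2 hqle ha hb hia hib hnr).2
    · obtain ⟨w⟩ := hr
      exact Stmt10.fij_mem_prime_of_walk hq.1 hq.2 hqle w
end
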